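/- arXiv:1603.06992 — 4 statements merged into one kernel-verified Lean document; each statement's English description precedes it below -/
import Mathlib

section
/- Let V and H be complex Hilbert spaces such that V is continuously embedded as a dense subspace of H. Let a : V × V → ℂ be a continuous sesquilinear form, and assume there exist a constant α > 0 and bounded linear operators Φ₁, Φ₂ : V → V such that for all u ∈ V one has |a(u,u)| + |a(u,Φ₁ u)| ≥ α‖u‖_V² and |a(u,u)| + |a(Φ₂ u, u)| ≥ α‖u‖_V². Assume further that Φ₁ extends to a bounded linear operator on H. Then there exists a closed, densely defined (unbounded) linear operator S on H whose domain is D(S) = { u ∈ V : the antilinear map v ↦ a(u,v) extends continuously to H }, and such that a(u,v) = ⟨S u, v⟩_H for all u ∈ D(S) and all v ∈ V. -/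
open scoped InnerProductSpace

/-- **Generalized Lax–Milgram theorem** (Almog–Helffer).
Let `V`, `H` be complex Hilbert spaces with `V` continuously embedded (via `j`) as a dense
subspace of `H`.  Let `a` be a continuous sesquilinear form on `V × V` (linear in the first
variable, antilinear in the second), and suppose there are `α > 0` and bounded operators
`Φ₁, Φ₂` on `V` with `|a(u,u)| + |a(u,Φ₁u)| ≥ α‖u‖²` and `|a(u,u)| + |a(Φ₂u,u)| ≥ α‖u‖²`
for all `u ∈ V`, and that `Φ₁` extends to a bounded operator on `H`.  Then there is a
closed, densely defined operator `S` on `H` with domain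
`D(S) = { u ∈ V : v ↦ a(u,v) extends continuously to H }` such that
`a(u,v) = ⟨Su, v⟩_H` for all `u ∈ D(S)`, `v ∈ V` (the inner product being linear in its
first and antilinear in its second entry, i.e. `⟨x,y⟩_H = ⟪y,x⟫` in Mathlib's convention). -/
theorem generalized_lax_milgram
    {V H : Type*} [NormedAddCommGroup V] [InnerProductSpace ℂ V] [CompleteSpace V]
    [NormedAddCommGroup H] [InnerProductSpace ℂ H] [CompleteSpace H]
    (j : V →L[ℂ] H) (hj_inj : Function.Injective j) (hj_dense : DenseRange j)
    (a : V → V → ℂ)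
    (ha_add_left : ∀ u u' v : V, a (u + u') v = a u v + a u' v)
    (ha_add_right : ∀ u v v' : V, a u (v + v') = a u v + a u v')
    (ha_smul_left : ∀ (c : ℂ) (u v : V), a (c • u) v = c * a u v)
    (ha_smul_right : ∀ (c : ℂ) (u v : V), a u (c • v) = (starRingEnd ℂ) c * a u v)
    (ha_cont : ∃ c > (0:ℝ), ∀ u v : V, ‖a u v‖ ≤ c * ‖u‖ * ‖v‖)
    (α : ℝ) (hα : 0 < α) (Φ₁ Φ₂ : V →L[ℂ] V)
    (hcoer₁ : ∀ u : V, α * ‖u‖ ^ 2 ≤ ‖a u u‖ + ‖a u (Φ₁ u)‖)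
    (hcoer₂ : ∀ u : V, α * ‖u‖ ^ 2 ≤ ‖a u u‖ + ‖a (Φ₂ u) u‖)
    (hΦ₁_ext : ∃ Ψ : H →L[ℂ] H, ∀ u : V, Ψ (j u) = j (Φ₁ u)) :
    ∃ (D : Submodule ℂ H) (S : D →ₗ[ℂ] H),
      Dense (D : Set H) ∧
      IsClosed {p : H × H | ∃ x : D, p.1 = (x : H) ∧ p.2 = S x} ∧
      (D : Set H) = {h : H | ∃ u : V, j u = h ∧
        ∃ φ : H → ℂ, Continuous φ ∧ ∀ v : V, φ (j v) = a u v} ∧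
      ∀ (u : V) (hu : j u ∈ D), ∀ v : V, a u v = ⟪j v, S ⟨j u, hu⟩⟫_ℂ := by
  classical
  obtain ⟨c, hc0, hb⟩ := ha_cont
  -- Step 1: the bounded operator `T : V →L V` with `a u v = ⟪v, T u⟫`.
  have hTw : ∀ u : V, ∃ w : V, ∀ v, a u v = ⟪v, w⟫_ℂ := by
    intro u
    let L : V →ₗ[ℂ] ℂ :=
      { toFun := fun v => (starRingEnd ℂ) (a u v)
        map_add' := fun v w => by simp [ha_add_right u v w]
        map_smul' := fun m v => by simp [ha_smul_right m u v] }
    have hLb : ∀ v, ‖L v‖ ≤ c * ‖u‖ * ‖v‖ := fun v => by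
      simpa [L] using hb u v
    refine ⟨(InnerProductSpace.toDual ℂ V).symm (L.mkContinuous (c * ‖u‖) hLb), fun v => ?_⟩
    have h1 : ⟪(InnerProductSpace.toDual ℂ V).symm (L.mkContinuous (c * ‖u‖) hLb), v⟫_ℂ
        = (starRingEnd ℂ) (a u v) := InnerProductSpace.toDual_symm_apply
    rw [← inner_conj_symm, h1, Complex.conj_conj]
  choose Tf hTf using hTw
  have hTadd : ∀ u u', Tf (u + u') = Tf u + Tf u' := by
    intro u u'
    refine ext_inner_left ℂ fun v => ?_
    rw [← hTf, inner_add_right, ← hTf, ← hTf, ha_add_left]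
  have hTsmul : ∀ (m : ℂ) u, Tf (m • u) = m • Tf u := by
    intro m u
    refine ext_inner_left ℂ fun v => ?_
    rw [← hTf, inner_smul_right, ← hTf, ha_smul_left]
  have hTb : ∀ u, ‖Tf u‖ ≤ c * ‖u‖ := by
    intro u
    rcases eq_or_ne (Tf u) 0 with h0 | h0
    · rw [h0, norm_zero]; positivity
    · have hpos : 0 < ‖Tf u‖ := norm_pos_iff.2 h0
      have h1 : ‖Tf u‖ ^ 2 = ‖a u (Tf u)‖ := by
        rw [hTf u (Tf u), inner_self_eq_norm_sq_to_K]
        simp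
      have h2 := hb u (Tf u)
      nlinarith
  let T : V →L[ℂ] V := LinearMap.mkContinuous
    { toFun := Tf, map_add' := hTadd, map_smul' := hTsmul } c hTb
  have hT : ∀ u v, a u v = ⟪v, T u⟫_ℂ := hTf
  -- Step 2: lower bounds for T and its adjoint.
  have hTlow : ∀ u, α * ‖u‖ ≤ (1 + ‖Φ₁‖) * ‖T u‖ := by
    intro u
    rcases eq_or_ne u 0 with h0 | h0
    · simp [h0]
    · have hpos : 0 < ‖u‖ := norm_pos_iff.2 h0
      have h1 : ‖a u u‖ ≤ ‖u‖ * ‖T u‖ := by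
        rw [hT]; exact norm_inner_le_norm _ _
      have h2 : ‖a u (Φ₁ u)‖ ≤ ‖Φ₁‖ * ‖u‖ * ‖T u‖ := by
        rw [hT]
        calc ‖⟪Φ₁ u, T u⟫_ℂ‖ ≤ ‖Φ₁ u‖ * ‖T u‖ := norm_inner_le_norm _ _
          _ ≤ ‖Φ₁‖ * ‖u‖ * ‖T u‖ := by
              have := Φ₁.le_opNorm u
              have := norm_nonneg (T u)
              nlinarith
      have h3 := hcoer₁ u
      nlinarith
  let T' : V →L[ℂ] V := ContinuousLinearMap.adjoint T
  have hT' : ∀ u v, a u v = ⟪T' v, u⟫_ℂ := by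
    intro u v
    rw [hT, ContinuousLinearMap.adjoint_inner_left]
  have hT'low : ∀ u, α * ‖u‖ ≤ (1 + ‖Φ₂‖) * ‖T' u‖ := by
    intro u
    rcases eq_or_ne u 0 with h0 | h0
    · simp [h0]
    · have hpos : 0 < ‖u‖ := norm_pos_iff.2 h0
      have h1 : ‖a u u‖ ≤ ‖T' u‖ * ‖u‖ := by
        rw [hT']; exact norm_inner_le_norm _ _
      have h2 : ‖a (Φ₂ u) u‖ ≤ ‖T' u‖ * (‖Φ₂‖ * ‖u‖) := by
        rw [hT']
        calc ‖⟪T' u, Φ₂ u⟫_ℂ‖ ≤ ‖T' u‖ * ‖Φ₂ u‖ := norm_inner_le_norm _ _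
          _ ≤ ‖T' u‖ * (‖Φ₂‖ * ‖u‖) := by
              have := Φ₂.le_opNorm u
              have := norm_nonneg (T' u)
              nlinarith
      have h3 := hcoer₂ u
      nlinarith
  -- Step 3: T is bijective.
  have hΦ₁pos : (0:ℝ) < 1 + ‖Φ₁‖ := by positivity
  have hΦ₂pos : (0:ℝ) < 1 + ‖Φ₂‖ := by positivity
  have hTbelow : ∀ u, ‖u‖ ≤ ((1 + ‖Φ₁‖) / α) * ‖T u‖ := by
    intro u
    rw [div_mul_eq_mul_div, le_div_iff₀ hα]
    have := hTlow u; nlinarith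
  have hT'below : ∀ u, ‖u‖ ≤ ((1 + ‖Φ₂‖) / α) * ‖T' u‖ := by
    intro u
    rw [div_mul_eq_mul_div, le_div_iff₀ hα]
    have := hT'low u; nlinarith
  have hTinj : Function.Injective T := by
    intro u u' huu
    have h1 : ‖u - u'‖ ≤ ((1 + ‖Φ₁‖) / α) * ‖T (u - u')‖ := hTbelow _
    rw [map_sub, huu, sub_self, norm_zero, mul_zero] at h1
    have := norm_nonneg (u - u')
    have : ‖u - u'‖ = 0 := le_antisymm h1 this
    rwa [norm_sub_eq_zero_iff] at this
  have hker : LinearMap.ker (T : V →ₗ[ℂ] V) = ⊥ := LinearMap.ker_eq_bot.mpr hTinj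
  have hanti : AntilipschitzWith (Real.toNNReal ((1 + ‖Φ₁‖) / α)) T := by
    apply T.antilipschitz_of_bound
    intro x
    rw [Real.coe_toNNReal _ (by positivity)]
    exact hTbelow x
  have hclosedrange : IsClosed (Set.range ⇑T) :=
    AntilipschitzWith.isClosed_range hanti (ContinuousLinearMap.uniformContinuous T)
  have hrange : LinearMap.range (T : V →ₗ[ℂ] V) = ⊤ := by
    have hcs : CompleteSpace (LinearMap.range (T : V →ₗ[ℂ] V)) := by
      replace hclosedrange : IsClosed ((LinearMap.range (T : V →ₗ[ℂ] V) : Set V)) := hclosedrange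
      exact hclosedrange.completeSpace_coe
    rw [← Submodule.orthogonal_eq_bot_iff]
    rw [Submodule.eq_bot_iff]
    intro x hx
    rw [Submodule.mem_orthogonal] at hx
    have hx' : ∀ u : V, ⟪T u, x⟫_ℂ = 0 := fun u => hx (T u) ⟨u, rfl⟩
    have hT'x : T' x = 0 := by
      have h1 : ⟪T' x, T' x⟫_ℂ = 0 := by
        have h0 : ⟪T' x, T' x⟫_ℂ = ⟪x, T (T' x)⟫_ℂ :=
          ContinuousLinearMap.adjoint_inner_left T (T' x) x
        rw [h0, ← inner_conj_symm, hx', map_zero]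
      exact inner_self_eq_zero.mp h1
    have h2 := hT'below x
    rw [hT'x, norm_zero, mul_zero] at h2
    have := norm_nonneg x
    have : ‖x‖ = 0 := le_antisymm h2 this
    exact norm_eq_zero.mp this
  let Teq : V ≃L[ℂ] V := ContinuousLinearEquiv.ofBijective T hker hrange
  have hTeq : ∀ x, Teq x = T x := fun x => rfl
  have hTeqsymm : ∀ y, T (Teq.symm y) = y := fun y => Teq.apply_symm_apply y
  -- Step 4: the adjoint of j.
  let j' : H →L[ℂ] V := ContinuousLinearMap.adjoint j
  have hj' : ∀ (h : H) (v : V), ⟪j' h, v⟫_ℂ = ⟪h, j v⟫_ℂ := fun h v =>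
    ContinuousLinearMap.adjoint_inner_left j v h
  have hj'inj : Function.Injective j' := by
    have hzero : ∀ f : H, j' f = 0 → f = 0 := by
      intro f hf
      have h1 : ∀ x : H, ⟪f, x⟫_ℂ = 0 := by
        have heq : Set.EqOn (fun x : H => ⟪f, x⟫_ℂ) (fun _ : H => (0:ℂ)) (Set.range ⇑j) := by
          rintro x ⟨v, rfl⟩
          show ⟪f, j v⟫_ℂ = 0
          rw [← hj' f v, hf]
          simp
        have := Continuous.ext_on hj_dense
          (continuous_const.inner continuous_id) continuous_const heq
        exact fun x => congrFun this x
      have := h1 f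
      exact inner_self_eq_zero.mp this
    intro f g hfg
    have : j' (f - g) = 0 := by rw [map_sub, hfg, sub_self]
    have := hzero _ this
    exact sub_eq_zero.mp this
  -- The domain in V and in H.
  let K : Submodule ℂ V :=
    Submodule.comap (T : V →ₗ[ℂ] V) (LinearMap.range (j' : H →ₗ[ℂ] V))
  have hKmem : ∀ u : V, u ∈ K ↔ ∃ f : H, j' f = T u := by
    intro u
    simp [K, LinearMap.mem_range]
  let D : Submodule ℂ H := K.map (j : V →ₗ[ℂ] H)
  have hDmem : ∀ h : H, h ∈ D ↔ ∃ u ∈ K, j u = h := by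
    intro h
    simp [D, Submodule.mem_map]
  have hmemK : ∀ u : V, j u ∈ D → u ∈ K := by
    intro u hu
    obtain ⟨u', hu'K, hju'⟩ := (hDmem _).mp hu
    have : u' = u := hj_inj hju'
    rwa [this] at hu'K
  -- The Riesz representative map g.
  let g : V → H := fun u => if h : ∃ f : H, j' f = T u then h.choose else 0
  have hg : ∀ u ∈ K, j' (g u) = T u := by
    intro u hu
    have h : ∃ f : H, j' f = T u := (hKmem u).mp hu
    simp only [g, dif_pos h]
    exact h.choose_spec
  have hgu : ∀ u ∈ K, ∀ f : H, j' f = T u → g u = f := by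
    intro u hu f hf
    exact hj'inj (by rw [hg u hu, hf])
  have hrepg : ∀ u ∈ K, ∀ v : V, a u v = ⟪j v, g u⟫_ℂ := by
    intro u hu v
    rw [← inner_conj_symm, ← hj' (g u) v, hg u hu, ← inner_conj_symm (T u) v, Complex.conj_conj,
      hT]
  -- The operator S.
  let Slin : K →ₗ[ℂ] H :=
    { toFun := fun u => g u.1
      map_add' := by
        intro u w
        apply hj'inj
        rw [map_add, hg _ (u + w).2, hg _ u.2, hg _ w.2]
        push_cast
        rw [map_add]
      map_smul' := by
        intro m u
        apply hj'inj
        rw [RingHom.id_apply, map_smul, hg _ (m • u).2, hg _ u.2]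
        push_cast
        rw [map_smul] }
  let e : K ≃ₗ[ℂ] D := Submodule.equivMapOfInjective (j : V →ₗ[ℂ] H) hj_inj K
  let S : D →ₗ[ℂ] H := Slin ∘ₗ (e.symm : D →ₗ[ℂ] K)
  have hS : ∀ (u : V) (hu : u ∈ K) (hu' : j u ∈ D), S ⟨j u, hu'⟩ = g u := by
    intro u hu hu'
    have he : e ⟨u, hu⟩ = ⟨j u, hu'⟩ := by
      apply Subtype.ext
      exact Submodule.coe_equivMapOfInjective_apply _ _ _ _
    have : e.symm ⟨j u, hu'⟩ = ⟨u, hu⟩ := by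
      rw [← he, LinearEquiv.symm_apply_apply]
    show Slin (e.symm ⟨j u, hu'⟩) = g u
    rw [this]
    rfl
  -- Surjectivity onto H.
  have hsurj : ∀ f : H, ∃ u, u ∈ K ∧ T u = j' f ∧ g u = f := by
    intro f
    refine ⟨Teq.symm (j' f), ?_, ?_, ?_⟩
    · exact (hKmem _).mpr ⟨f, (hTeqsymm (j' f)).symm⟩
    · exact hTeqsymm (j' f)
    · exact hgu _ ((hKmem _).mpr ⟨f, (hTeqsymm (j' f)).symm⟩) f (hTeqsymm (j' f)).symm
  refine ⟨D, S, ?_, ?_, ?_, ?_⟩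
  · -- Density
    have hdense_j' :
        Dense ((LinearMap.range (j' : H →ₗ[ℂ] V) : Submodule ℂ V) : Set V) := by
      have horth : (LinearMap.range (j' : H →ₗ[ℂ] V))ᗮ = ⊥ := by
        rw [Submodule.eq_bot_iff]
        intro x hx
        have h1 : ⟪j' (j x), x⟫_ℂ = 0 := hx _ (LinearMap.mem_range_self _ (j x))
        rw [hj'] at h1
        have := inner_self_eq_zero.mp h1
        exact hj_inj (by rw [this, map_zero])
      have htop := Submodule.topologicalClosure_eq_top_iff.mpr horth
      rw [dense_iff_closure_eq, ← Submodule.topologicalClosure_coe, htop, Submodule.top_coe]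
    have hdenseK : Dense (K : Set V) := by
      have h1 : Dense (⇑Teq.symm ''
          ((LinearMap.range (j' : H →ₗ[ℂ] V) : Submodule ℂ V) : Set V)) :=
        (Teq.symm.surjective.denseRange).dense_image Teq.symm.continuous hdense_j'
      refine h1.mono ?_
      rintro _ ⟨_, ⟨f, rfl⟩, rfl⟩
      exact (hKmem _).mpr ⟨f, (hTeqsymm (j' f)).symm⟩
    have h2 : (D : Set H) = ⇑j '' (K : Set V) := by
      rw [Submodule.map_coe]
      rfl
    rw [h2]
    exact hj_dense.dense_image j.continuous hdenseK
  · -- Closed graph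
    apply IsSeqClosed.isClosed
    intro P q hP hPq
    choose X hX1 hX2 using hP
    obtain ⟨w, hwK, hTw', hgw⟩ := hsurj q.2
    choose u huK hju using fun n => Submodule.mem_map.mp (X n).2
    have hXn : ∀ n, X n = ⟨j (u n), (hju n) ▸ (X n).2⟩ := by
      intro n; exact Subtype.ext (hju n).symm
    have hq1 : Filter.Tendsto (fun n => j (u n)) Filter.atTop (nhds q.1) := by
      have h1 : Filter.Tendsto (fun n => (P n).1) Filter.atTop (nhds q.1) :=
        (continuous_fst.tendsto q).comp hPq
      convert h1 using 2 with n
      rw [hX1 n]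
      exact hju n
    have hq2 : Filter.Tendsto (fun n => g (u n)) Filter.atTop (nhds q.2) := by
      have h1 : Filter.Tendsto (fun n => (P n).2) Filter.atTop (nhds q.2) :=
        (continuous_snd.tendsto q).comp hPq
      convert h1 using 2 with n
      rw [hX2 n, hXn n, hS (u n) (huK n)]
    -- weak convergence of T (u n) to T w
    have hTconv : ∀ v : V, Filter.Tendsto (fun n => ⟪v, T (u n)⟫_ℂ)
        Filter.atTop (nhds ⟪v, T w⟫_ℂ) := by
      intro v
      have h1 : ∀ n, ⟪v, T (u n)⟫_ℂ = ⟪j v, g (u n)⟫_ℂ := by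
        intro n
        rw [← hT, hrepg _ (huK n)]
      have h2 : ⟪v, T w⟫_ℂ = ⟪j v, q.2⟫_ℂ := by
        rw [← hT, hrepg _ hwK, hgw]
      rw [h2]
      simp only [h1]
      exact Filter.Tendsto.inner tendsto_const_nhds hq2
    have hwconv : ∀ z : V, Filter.Tendsto (fun n => ⟪z, u n⟫_ℂ)
        Filter.atTop (nhds ⟪z, w⟫_ℂ) := by
      intro z
      have key : ∀ x : V, ⟪z, x⟫_ℂ
          = ⟪(ContinuousLinearMap.adjoint (Teq.symm : V →L[ℂ] V)) z, T x⟫_ℂ := by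
        intro x
        rw [ContinuousLinearMap.adjoint_inner_left]
        congr 1
        exact (Teq.symm_apply_apply x).symm
      simp only [key]
      exact hTconv _
    have hq1' : q.1 = j w := by
      refine ext_inner_left ℂ fun z => ?_
      have h1 : Filter.Tendsto (fun n => ⟪z, (j (u n) : H)⟫_ℂ)
          Filter.atTop (nhds ⟪z, q.1⟫_ℂ) :=
        Filter.Tendsto.inner tendsto_const_nhds hq1
      have h2 : Filter.Tendsto (fun n => ⟪z, (j (u n) : H)⟫_ℂ)
          Filter.atTop (nhds ⟪z, j w⟫_ℂ) := by
        have h3 : ∀ x : V, ⟪z, (j x : H)⟫_ℂ = ⟪j' z, x⟫_ℂ := fun x => (hj' z x).symm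
        simp only [h3]
        exact hwconv (j' z)
      exact tendsto_nhds_unique h1 h2
    have hmem : q.1 ∈ D := by
      rw [hq1']
      exact (hDmem _).mpr ⟨w, hwK, rfl⟩
    refine ⟨⟨q.1, hmem⟩, rfl, ?_⟩
    have : (⟨q.1, hmem⟩ : D) = ⟨j w, hq1' ▸ hmem⟩ := Subtype.ext hq1'
    rw [this, hS w hwK, hgw]
  · -- Set equality
    ext h
    constructor
    · intro hh
      obtain ⟨u, huK, hju⟩ := (hDmem h).mp hh
      exact ⟨u, hju, fun x => ⟪x, g u⟫_ℂ,
        (continuous_id.inner continuous_const), fun v => (hrepg u huK v).symm⟩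
    · rintro ⟨u, hju, φ, hφc, hφ⟩
      rw [← hju]
      refine (hDmem _).mpr ⟨u, ?_, rfl⟩
      -- show u ∈ K : the functional extends
      set L : H → ℂ := fun x => (starRingEnd ℂ) (φ x) with hL
      have hLc : Continuous L := Complex.continuous_conj.comp hφc
      have hLj : ∀ v : V, L (j v) = (starRingEnd ℂ) (a u v) := by
        intro v; rw [hL]; simp only [hφ v]
      have hLadd : ∀ x y : H, L (x + y) = L x + L y := by
        have hdense2 : Dense ((Set.range ⇑j) ×ˢ (Set.range ⇑j) : Set (H × H)) :=
          hj_dense.prod hj_dense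
        have heq : Set.EqOn (fun p : H × H => L (p.1 + p.2))
            (fun p : H × H => L p.1 + L p.2) ((Set.range ⇑j) ×ˢ (Set.range ⇑j)) := by
          rintro ⟨x, y⟩ ⟨⟨v, rfl⟩, ⟨v', rfl⟩⟩
          show L (j v + j v') = L (j v) + L (j v')
          rw [← map_add, hLj, hLj, hLj, ha_add_right, map_add]
        have := Continuous.ext_on hdense2
          (hLc.comp (continuous_fst.add continuous_snd))
          ((hLc.comp continuous_fst).add (hLc.comp continuous_snd)) heq
        intro x y
        exact congrFun this (x, y)
      have hLsmul : ∀ (m : ℂ) (x : H), L (m • x) = m * L x := by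
        intro m
        have heq : Set.EqOn (fun x : H => L (m • x)) (fun x : H => m * L x)
            (Set.range ⇑j) := by
          rintro x ⟨v, rfl⟩
          show L (m • j v) = m * L (j v)
          rw [← map_smul, hLj, hLj, ha_smul_right, map_mul, Complex.conj_conj]
        have := Continuous.ext_on hj_dense
          (hLc.comp (continuous_const.smul continuous_id))
          (continuous_const.mul hLc) heq
        exact fun x => congrFun this x
      let L' : H →L[ℂ] ℂ :=
        { toFun := L
          map_add' := hLadd
          map_smul' := fun m x => by rw [RingHom.id_apply]; exact hLsmul m x
          cont := hLc }
      let f := (InnerProductSpace.toDual ℂ H).symm L'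
      have hf : ∀ x : H, ⟪f, x⟫_ℂ = L x := fun x => InnerProductSpace.toDual_symm_apply
      refine (hKmem u).mpr ⟨f, ?_⟩
      refine ext_inner_right ℂ fun v => ?_
      rw [hj' f v, hf (j v), hLj v, ← inner_conj_symm (T u) v, ← hT u v]
  · -- Representation
    intro u hu v
    rw [hS u (hmemK u hu) hu]
    exact hrepg u (hmemK u hu) v
end

section
/- For every z ∈ ℂ one has e^{-iα}·Ai'(e^{-iα}z)·Ai(e^{iα}z) − e^{iα}·Ai'(e^{iα}z)·Ai(e^{-iα}z) = i/(2π). -/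
noncomputable section

/-- The Airy function, defined by its entire power series. -/
def Ai (z : ℂ) : ℂ :=
  (((3 : ℝ) ^ (-(2:ℝ)/3) / Real.Gamma (2/3) : ℝ) : ℂ) *
    ∑' k : ℕ, (∏ j ∈ Finset.range k, ((3*j+1 : ℕ) : ℂ)) * z ^ (3*k) / ((3*k).factorial : ℂ)
  + ((-((3 : ℝ) ^ (-(1:ℝ)/3)) / Real.Gamma (1/3) : ℝ) : ℂ) *
    ∑' k : ℕ, (∏ j ∈ Finset.range k, ((3*j+2 : ℕ) : ℂ)) * z ^ (3*k+1) / ((3*k+1).factorial : ℂ)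

/-- The derivative of the Airy function. -/
def Ai' (z : ℂ) : ℂ := deriv Ai z

/-- The angle α = 2π/3. -/
def α : ℝ := 2 * Real.pi / 3

namespace AiryAux

open FormalMultilinearSeries

def c0 : ℝ := (3 : ℝ) ^ (-(2:ℝ)/3) / Real.Gamma (2/3)
def c1 : ℝ := -((3 : ℝ) ^ (-(1:ℝ)/3)) / Real.Gamma (1/3)

def a : ℕ → ℂ
  | 0 => (c0 : ℂ)
  | 1 => (c1 : ℂ)
  | 2 => 0
  | (n+3) => a n / (((n:ℂ)+3) * ((n:ℂ)+2))

lemma nc3 (n : ℕ) : ((n:ℂ)+3) ≠ 0 := by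
  intro h; exact absurd (by exact_mod_cast h : n+3 = 0) (by omega)
lemma nc2 (n : ℕ) : ((n:ℂ)+2) ≠ 0 := by
  intro h; exact absurd (by exact_mod_cast h : n+2 = 0) (by omega)

lemma a_rec (n : ℕ) : (((n:ℂ)+3) * ((n:ℂ)+2)) * a (n+3) = a n := by
  rw [a, mul_div_cancel₀ _ (mul_ne_zero (nc3 n) (nc2 n))]

lemma a_3k (k : ℕ) :
    a (3*k) = (c0 : ℂ) * (∏ j ∈ Finset.range k, ((3*j+1 : ℕ) : ℂ)) / ((3*k).factorial : ℂ) := by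
  induction k with
  | zero => simp [a]
  | succ k ih =>
    have h1 : 3*(k+1) = 3*k+3 := by ring
    have hfac : (((3*k+3).factorial : ℂ)) =
        ((3*k+3 : ℕ) : ℂ) * ((3*k+2 : ℕ) : ℂ) * ((3*k+1 : ℕ) : ℂ) * ((3*k).factorial : ℂ) := by
      push_cast [show (3*k+3) = (3*k+2)+1 by ring, Nat.factorial_succ,
        show (3*k+2) = (3*k+1)+1 by ring, show (3*k+1) = (3*k)+1 by ring]
      ring
    rw [h1, a, ih, Finset.prod_range_succ, hfac]
    have hx1 : (3*(k:ℂ)+1) ≠ 0 := by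
      intro h; exact absurd (by exact_mod_cast h : 3*k+1 = 0) (by omega)
    have hx2 : (3*(k:ℂ)+2) ≠ 0 := by
      intro h; exact absurd (by exact_mod_cast h : 3*k+2 = 0) (by omega)
    have hx3 : (3*(k:ℂ)+3) ≠ 0 := by
      intro h; exact absurd (by exact_mod_cast h : 3*k+3 = 0) (by omega)
    have hfk : (((3*k).factorial : ℕ) : ℂ) ≠ 0 := Nat.cast_ne_zero.mpr (3*k).factorial_ne_zero
    push_cast
    rw [div_div, div_eq_div_iff (mul_ne_zero hfk (mul_ne_zero hx3 hx2))
      (mul_ne_zero (mul_ne_zero (mul_ne_zero hx3 hx2) hx1) hfk)]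
    ring

lemma a_3k1 (k : ℕ) :
    a (3*k+1) = (c1 : ℂ) * (∏ j ∈ Finset.range k, ((3*j+2 : ℕ) : ℂ)) / ((3*k+1).factorial : ℂ) := by
  induction k with
  | zero => simp [a]
  | succ k ih =>
    have h1 : 3*(k+1)+1 = (3*k+1)+3 := by ring
    have hfac : ((((3*k+1)+3).factorial : ℂ)) =
        ((3*k+4 : ℕ) : ℂ) * ((3*k+3 : ℕ) : ℂ) * ((3*k+2 : ℕ) : ℂ) * ((3*k+1).factorial : ℂ) := by
      push_cast [show ((3*k+1)+3) = (3*k+3)+1 by ring, Nat.factorial_succ,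
        show (3*k+3) = (3*k+2)+1 by ring, show (3*k+2) = (3*k+1)+1 by ring]
      ring
    rw [h1, a, ih, Finset.prod_range_succ, hfac]
    have hx1 : (3*(k:ℂ)+2) ≠ 0 := by
      intro h; exact absurd (by exact_mod_cast h : 3*k+2 = 0) (by omega)
    have hx2 : (3*(k:ℂ)+3) ≠ 0 := by
      intro h; exact absurd (by exact_mod_cast h : 3*k+3 = 0) (by omega)
    have hx3 : (3*(k:ℂ)+4) ≠ 0 := by
      intro h; exact absurd (by exact_mod_cast h : 3*k+4 = 0) (by omega)
    have hfk : (((3*k+1).factorial : ℕ) : ℂ) ≠ 0 := Nat.cast_ne_zero.mpr (3*k+1).factorial_ne_zero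
    have hy2 : (3*(k:ℂ)+1+3) ≠ 0 := by intro h; exact hx3 (by linear_combination h)
    have hy1 : (3*(k:ℂ)+1+2) ≠ 0 := by intro h; exact hx2 (by linear_combination h)
    push_cast
    rw [div_div, div_eq_div_iff (mul_ne_zero hfk (mul_ne_zero hy2 hy1))
      (mul_ne_zero (mul_ne_zero (mul_ne_zero hx3 hx2) hx1) hfk)]
    ring

lemma a_3k2 (k : ℕ) : a (3*k+2) = 0 := by
  induction k with
  | zero => simp [a]
  | succ k ih =>
    have h1 : 3*(k+1)+2 = (3*k+2)+3 := by ring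
    rw [h1, a, ih, zero_div]

/-! ### Norm bounds and radius of convergence -/

def C : ℝ := max |c0| |c1|

lemma C_nonneg : 0 ≤ C := le_trans (abs_nonneg _) (le_max_left _ _)

lemma a_norm_le : ∀ n : ℕ, ‖a n‖ ≤ C / ((n/3).factorial : ℝ) := by
  intro n
  induction n using Nat.strong_induction_on with
  | _ n ih =>
    match n with
    | 0 => simpa [a, Complex.norm_real, C] using le_max_left |c0| |c1|
    | 1 => simpa [a, Complex.norm_real, C] using le_max_right |c1| |c0| |>.trans_eq (max_comm _ _)
    | 2 =>
      have hz : a 2 = 0 := by simp [a]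
      rw [hz, norm_zero]
      have : ((2:ℕ)/3) = 0 := by norm_num
      rw [this]
      simpa using C_nonneg
    | (m+3) =>
      have hm := ih m (by omega)
      have hd : (m+3)/3 = m/3 + 1 := by omega
      rw [a, hd, norm_div, norm_mul]
      have h3 : ‖((m:ℂ)+3)‖ = (m:ℝ)+3 := by
        rw [show ((m:ℂ)+3) = (((m+3:ℕ)):ℂ) by push_cast; ring, Complex.norm_natCast]
        push_cast; ring
      have h2 : ‖((m:ℂ)+2)‖ = (m:ℝ)+2 := by
        rw [show ((m:ℂ)+2) = (((m+2:ℕ)):ℂ) by push_cast; ring, Complex.norm_natCast]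
        push_cast; ring
      rw [h3, h2]
      set K := m/3 with hK
      have hfacK : (0:ℝ) < (K.factorial : ℝ) := by exact_mod_cast K.factorial_pos
      have hfacK1 : (0:ℝ) < ((K+1).factorial : ℝ) := by exact_mod_cast (K+1).factorial_pos
      have hden : (0:ℝ) < ((m:ℝ)+3) * ((m:ℝ)+2) := by positivity
      calc ‖a m‖ / (((m:ℝ)+3) * ((m:ℝ)+2))
          ≤ (C / (K.factorial : ℝ)) / (((m:ℝ)+3) * ((m:ℝ)+2)) := by gcongr
        _ = C / ((K.factorial : ℝ) * (((m:ℝ)+3) * ((m:ℝ)+2))) := by rw [div_div]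
        _ ≤ C / (((K+1).factorial : ℝ)) := by
            apply div_le_div_of_nonneg_left C_nonneg hfacK1
            have hnat : (K+1).factorial ≤ K.factorial * ((m+3) * (m+2)) := by
              rw [Nat.factorial_succ]
              have hKm : K ≤ m := Nat.div_le_self m 3
              have h1 : K + 1 ≤ (m+3) * (m+2) := by
                calc K + 1 ≤ m + 3 := by omega
                  _ = (m+3) * 1 := (mul_one _).symm
                  _ ≤ (m+3) * (m+2) := Nat.mul_le_mul_left _ (by omega)
              calc (K+1) * K.factorial ≤ ((m+3)*(m+2)) * K.factorial := by
                    exact Nat.mul_le_mul_right _ h1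
                _ = K.factorial * ((m+3)*(m+2)) := by ring
            calc ((K+1).factorial : ℝ) ≤ ((K.factorial * ((m+3) * (m+2)) : ℕ) : ℝ) := by
                  exact_mod_cast hnat
              _ = (K.factorial : ℝ) * (((m:ℝ)+3) * ((m:ℝ)+2)) := by push_cast; ring

def a1 : ℕ → ℂ := fun n => ((n:ℂ)+1) * a (n+1)

lemma a1_norm_le (n : ℕ) : ‖a1 n‖ ≤ C * ((n:ℝ)+1)^2 / ((n/3).factorial : ℝ) := by
  have h1 : ‖a1 n‖ = ((n:ℝ)+1) * ‖a (n+1)‖ := by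
    rw [a1, norm_mul]
    congr 1
    rw [show ((n:ℂ)+1) = (((n+1:ℕ)):ℂ) by push_cast; ring, Complex.norm_natCast]
    push_cast; ring
  rw [h1]
  have h2 : ‖a (n+1)‖ ≤ C / ((n/3).factorial : ℝ) := by
    refine (a_norm_le (n+1)).trans ?_
    apply div_le_div_of_nonneg_left C_nonneg
    · exact_mod_cast (n/3).factorial_pos
    · exact_mod_cast Nat.factorial_le (Nat.div_le_div_right (Nat.le_succ n))
  have hF : (0:ℝ) < ((n/3).factorial : ℝ) := by exact_mod_cast (n/3).factorial_pos
  calc ((n:ℝ)+1) * ‖a (n+1)‖ ≤ ((n:ℝ)+1) * (C / ((n/3).factorial : ℝ)) := by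
        apply mul_le_mul_of_nonneg_left h2 (by positivity)
    _ = C * ((n:ℝ)+1) / ((n/3).factorial : ℝ) := by ring
    _ ≤ C * ((n:ℝ)+1)^2 / ((n/3).factorial : ℝ) := by
        gcongr
        · exact C_nonneg
        · nlinarith [Nat.cast_nonneg (α := ℝ) n]

lemma a_norm_le' (n : ℕ) : ‖a n‖ ≤ C * ((n:ℝ)+1)^2 / ((n/3).factorial : ℝ) := by
  have hF : (0:ℝ) < ((n/3).factorial : ℝ) := by exact_mod_cast (n/3).factorial_pos
  refine (a_norm_le n).trans ?_
  rw [div_le_div_iff₀ hF hF]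
  have h1 : (1:ℝ) ≤ ((n:ℝ)+1)^2 := by nlinarith [Nat.cast_nonneg (α := ℝ) n]
  nlinarith [mul_le_mul_of_nonneg_left h1 (mul_nonneg C_nonneg hF.le)]

/-! ### Radius of convergence -/

lemma pow_sq_bound (n : ℕ) : ((n:ℝ)+1)^2 ≤ (4:ℝ)^n := by
  have h1 : ((n:ℝ)+1) ≤ (2:ℝ)^n := by
    have h := Nat.lt_two_pow_self (n := n)
    have h' : (n:ℝ)+1 ≤ ((2^n : ℕ) : ℝ) := by exact_mod_cast h
    simpa using h'
  calc ((n:ℝ)+1)^2 ≤ ((2:ℝ)^n)^2 := by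
        apply pow_le_pow_left₀ (by positivity) h1
    _ = (4:ℝ)^n := by rw [← pow_mul, mul_comm, pow_mul]; norm_num

lemma radius_top {b : ℕ → ℂ} {C : ℝ}
    (hC : ∀ n, ‖b n‖ ≤ C * ((n:ℝ)+1)^2 / ((n/3).factorial : ℝ)) :
    (ofScalars ℂ b).radius = ⊤ := by
  apply ENNReal.eq_top_of_forall_nnreal_le
  intro r
  set u : ℝ := 4 * max 1 (r:ℝ) with hu_def
  have hu1 : (1:ℝ) ≤ u := by
    have : (1:ℝ) ≤ max 1 (r:ℝ) := le_max_left _ _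
    nlinarith
  have hu0 : (0:ℝ) ≤ u := by linarith
  set C' : ℝ := max C 0 with hC'_def
  have hC'0 : 0 ≤ C' := le_max_right _ _
  set T : ℝ := ∑' n : ℕ, (u^3)^n / (n.factorial : ℝ) with hT_def
  apply FormalMultilinearSeries.le_radius_of_bound _ (C' * u^2 * T)
  intro n
  set k := n/3 with hk_def
  have hkn : n ≤ 3*k + 2 := by omega
  have hbound : ((n:ℝ)+1)^2 * (r:ℝ)^n ≤ u^n := by
    calc ((n:ℝ)+1)^2 * (r:ℝ)^n ≤ (4:ℝ)^n * (max 1 (r:ℝ))^n := by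
          apply mul_le_mul (pow_sq_bound n) (pow_le_pow_left₀ r.coe_nonneg (le_max_right _ _) n)
            (by positivity) (by positivity)
      _ = u^n := by rw [← mul_pow]
  have hun : u^n ≤ u^2 * (u^3)^k := by
    calc u^n ≤ u^(3*k+2) := pow_le_pow_right₀ hu1 hkn
      _ = u^2 * (u^3)^k := by rw [← pow_mul, ← pow_add]; ring_nf
  have hTk : (u^3)^k / (k.factorial : ℝ) ≤ T := by
    apply Summable.le_tsum (Real.summable_pow_div_factorial (u^3)) k
    intro i _
    positivity
  have h1 : ‖ofScalars ℂ b n‖ = ‖b n‖ := ofScalars_norm ℂ b n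
  rw [h1]
  calc ‖b n‖ * (r:ℝ)^n ≤ (C' * ((n:ℝ)+1)^2 / (k.factorial : ℝ)) * (r:ℝ)^n := by
        apply mul_le_mul_of_nonneg_right _ (by positivity)
        refine (hC n).trans ?_
        gcongr
        exact le_max_left _ _
    _ = C' * (((n:ℝ)+1)^2 * (r:ℝ)^n) / (k.factorial : ℝ) := by ring
    _ ≤ C' * (u^2 * (u^3)^k) / (k.factorial : ℝ) := by
        gcongr C' * ?_ / _
        exact hbound.trans hun
    _ = C' * u^2 * ((u^3)^k / (k.factorial : ℝ)) := by ring
    _ ≤ C' * u^2 * T := by gcongr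

lemma radius_a : (ofScalars ℂ a).radius = ⊤ := radius_top a_norm_le'
lemma radius_a1 : (ofScalars ℂ a1).radius = ⊤ := radius_top a1_norm_le

/-! ### Derivatives of power series sums -/

lemma hasDerivAt_ofScalarsSum {b : ℕ → ℂ} (hb : (ofScalars ℂ b).radius = ⊤) (z : ℂ) :
    HasSum (fun n : ℕ => ((n:ℂ)+1) * b (n+1) * z^n) (deriv (ofScalarsSum b) z) ∧
      HasDerivAt (ofScalarsSum b) (deriv (ofScalarsSum b) z) z := by
  set p := ofScalars ℂ b with hp
  have hball : HasFPowerSeriesOnBall (ofScalarsSum b) p 0 ⊤ := by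
    have h := p.hasFPowerSeriesOnBall (by rw [hb]; exact ENNReal.zero_lt_top)
    rwa [hb] at h
  have hmem : z ∈ Metric.eball (0:ℂ) ⊤ := by simp [Metric.mem_eball, edist_lt_top]
  have hdiff : DifferentiableAt ℂ (ofScalarsSum b) z :=
    (hball.differentiableOn z hmem).differentiableAt (EMetric.isOpen_ball.mem_nhds hmem)
  have hfd := hball.fderiv
  have hsum := hfd.hasSum hmem
  rw [zero_add] at hsum
  have happ := (ContinuousLinearMap.apply ℂ ℂ (1:ℂ)).hasSum hsum
  have hterm : ∀ n, (p.derivSeries n fun _ => z) 1 = ((n:ℂ)+1) * b (n+1) * z^n := by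
    intro n
    rcases eq_or_ne z 0 with hz | hz
    · subst hz
      match n with
      | 0 =>
        have hv : (fun _ : Fin 0 => (0:ℂ)) = (fun _ => (1:ℂ)) := funext fun i => i.elim0
        rw [hv]
        have hd := p.derivSeries_apply_diag 0 1
        simp only [Nat.cast_zero] at hd ⊢
        rw [hd, ofScalars_apply_eq]
        norm_num
      | (m+1) =>
        have h0 : p.derivSeries (m+1) (fun _ => (0:ℂ)) = 0 :=
          (p.derivSeries (m+1)).map_coord_zero (0 : Fin (m+1)) rfl
        rw [h0]
        simp
    · have hd := p.derivSeries_apply_diag n z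
      rw [ofScalars_apply_eq] at hd
      have h2 : (p.derivSeries n fun _ => z) z = z * (p.derivSeries n fun _ => z) 1 := by
        calc (p.derivSeries n fun _ => z) z = (p.derivSeries n fun _ => z) (z • 1) := by
              norm_num
          _ = z * (p.derivSeries n fun _ => z) 1 := by rw [map_smul, smul_eq_mul]
      rw [h2] at hd
      apply mul_left_cancel₀ hz
      rw [hd]
      simp only [smul_eq_mul, nsmul_eq_mul]
      push_cast
      ring
  have hfun : (fun n => (ContinuousLinearMap.apply ℂ ℂ (1:ℂ)) (p.derivSeries n fun _ => z))
      = fun n : ℕ => ((n:ℂ)+1) * b (n+1) * z^n := funext fun n => hterm n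
  rw [hfun] at happ
  have hdz : (ContinuousLinearMap.apply ℂ ℂ (1:ℂ)) (fderiv ℂ (ofScalarsSum b) z)
      = deriv (ofScalarsSum b) z := fderiv_apply_one_eq_deriv
  rw [hdz] at happ
  exact ⟨happ, hdiff.hasDerivAt⟩

/-! ### Identification of `Ai` with the power series sum -/

lemma hasSum_a (z : ℂ) : HasSum (fun n : ℕ => a n * z^n) (ofScalarsSum a z) := by
  have hmem : z ∈ Metric.eball (0:ℂ) (ofScalars ℂ a).radius := by
    rw [radius_a]; simp [Metric.mem_eball, edist_lt_top]
  have h := (ofScalars ℂ a).hasSum hmem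
  have : (fun n : ℕ => ofScalars ℂ a n fun _ => z) = fun n : ℕ => a n * z^n := by
    funext n; rw [ofScalars_apply_eq, smul_eq_mul]
  rwa [this] at h

lemma Ai_eq_pt (z : ℂ) : Ai z = ofScalarsSum a z := by
  have hs := hasSum_a z
  set f : ℕ × Fin 3 → ℂ := (fun n : ℕ => a n * z^n) ∘ (Nat.divModEquiv 3).symm with hf
  have hs' : HasSum f (ofScalarsSum a z) := (Equiv.hasSum_iff (Nat.divModEquiv 3).symm).mpr hs
  have hfib : HasSum (fun q : ℕ => ∑ i : Fin 3, f (q, i)) (ofScalarsSum a z) :=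
    hs'.prod_fiberwise fun q => hasSum_fintype _
  have hsum0 : Summable (fun q : ℕ => a (3*q) * z^(3*q)) := by
    have hinj : Function.Injective (fun q : ℕ => 3*q) := fun x y h => by
      dsimp at h; omega
    exact hs.summable.comp_injective hinj
  have hsum1 : Summable (fun q : ℕ => a (3*q+1) * z^(3*q+1)) := by
    have hinj : Function.Injective (fun q : ℕ => 3*q+1) := fun x y h => by
      dsimp at h; omega
    exact hs.summable.comp_injective hinj
  have hg : (fun q : ℕ => ∑ i : Fin 3, f (q, i))
      = fun q : ℕ => a (3*q) * z^(3*q) + a (3*q+1) * z^(3*q+1) := by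
    funext q
    rw [Fin.sum_univ_three]
    have h0 : f (q, 0) = a (3*q) * z^(3*q) := by
      simp [hf, Nat.divModEquiv, mul_comm q 3]
    have h1 : f (q, 1) = a (3*q+1) * z^(3*q+1) := by
      simp [hf, Nat.divModEquiv, mul_comm q 3]
    have h2 : f (q, 2) = 0 := by
      simp [hf, Nat.divModEquiv, mul_comm q 3, a_3k2 q]
    rw [h0, h1, h2, add_zero]
  rw [hg] at hfib
  have hfib2 : HasSum (fun q : ℕ => a (3*q) * z^(3*q) + a (3*q+1) * z^(3*q+1))
      ((∑' q : ℕ, a (3*q) * z^(3*q)) + (∑' q : ℕ, a (3*q+1) * z^(3*q+1))) :=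
    hsum0.hasSum.add hsum1.hasSum
  have hkey := hfib.unique hfib2
  have ht0 : (∑' q : ℕ, a (3*q) * z^(3*q)) = (c0 : ℂ) *
      ∑' k : ℕ, (∏ j ∈ Finset.range k, ((3*j+1 : ℕ) : ℂ)) * z ^ (3*k) / ((3*k).factorial : ℂ) := by
    rw [← tsum_mul_left]
    apply tsum_congr
    intro q
    rw [a_3k q]
    ring
  have ht1 : (∑' q : ℕ, a (3*q+1) * z^(3*q+1)) = (c1 : ℂ) *
      ∑' k : ℕ, (∏ j ∈ Finset.range k, ((3*j+2 : ℕ) : ℂ)) * z ^ (3*k+1) / ((3*k+1).factorial : ℂ) := by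
    rw [← tsum_mul_left]
    apply tsum_congr
    intro q
    rw [a_3k1 q]
    ring
  rw [ht0, ht1] at hkey
  rw [Ai]
  exact hkey.symm

lemma Ai_eq : Ai = ofScalarsSum a := funext Ai_eq_pt

lemma hasDerivAt_Ai (z : ℂ) : HasDerivAt Ai (Ai' z) z := by
  have h := (hasDerivAt_ofScalarsSum radius_a z).2
  rw [← Ai_eq] at h
  exact h

lemma Ai'_eq_pt (z : ℂ) : Ai' z = ofScalarsSum a1 z := by
  have h := (hasDerivAt_ofScalarsSum radius_a z).1
  rw [← Ai_eq] at h
  rw [Ai', ← h.tsum_eq, ofScalars_sum_eq]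
  exact tsum_congr fun n => rfl

lemma Ai'_eq : Ai' = ofScalarsSum a1 := funext Ai'_eq_pt

lemma hasDerivAt_Ai' (z : ℂ) : HasDerivAt Ai' (z * Ai z) z := by
  obtain ⟨hsum, hder⟩ := hasDerivAt_ofScalarsSum radius_a1 z
  rw [← Ai'_eq] at hder hsum
  -- identify the derivative value with z * Ai z
  set wz : ℕ → ℂ := fun n => match n with
    | 0 => 0
    | (m+1) => a m * z^(m+1) with hwz
  have hterm : (fun n : ℕ => ((n:ℂ)+1) * a1 (n+1) * z^n) = wz := by
    funext n
    match n with
    | 0 =>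
      have h2 : a 2 = 0 := by simp [a]
      show (((0:ℕ):ℂ)+1) * a1 (0+1) * z^0 = 0
      norm_num [a1, h2]
    | (m+1) =>
      show (((m+1:ℕ):ℂ)+1) * a1 (m+2) * z^(m+1) = a m * z^(m+1)
      have hr := a_rec m
      rw [a1]
      push_cast
      calc ((m:ℂ)+1+1) * (((m:ℂ)+2+1) * a (m+2+1)) * z^(m+1)
          = ((((m:ℂ)+3) * ((m:ℂ)+2)) * a (m+3)) * z^(m+1) := by ring_nf
        _ = a m * z^(m+1) := by rw [hr]
  rw [hterm] at hsum
  have hw : HasSum wz (z * Ai z) := by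
    have h1 : HasSum (fun n : ℕ => wz (n+1)) (z * Ai z) := by
      have h2 := (hasSum_a z).mul_left z
      have : (fun n : ℕ => z * (a n * z^n)) = fun n : ℕ => wz (n+1) := by
        funext n; show z * (a n * z^n) = a n * z^(n+1); ring
      rw [this] at h2
      rw [← Ai_eq_pt] at h2
      exact h2
    have h3 := (hasSum_nat_add_iff (f := wz) 1).mp h1
    have h4 : ∑ i ∈ Finset.range 1, wz i = 0 := by simp [hwz]
    rw [h4, add_zero] at h3
    exact h3
  rw [hsum.unique hw] at hder
  exact hder

/-! ### The Wronskian -/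

def om : ℂ := Complex.exp ((α:ℂ) * Complex.I)
def om' : ℂ := Complex.exp (-(α:ℂ) * Complex.I)

lemma om_cube : om^3 = 1 := by
  rw [om, ← Complex.exp_nat_mul]
  have h : ((3:ℕ):ℂ) * ((α:ℂ) * Complex.I) = 2 * (Real.pi:ℂ) * Complex.I := by
    have hα : (α:ℝ) = 2*Real.pi/3 := rfl
    rw [hα]; push_cast; ring
  rw [h, Complex.exp_two_pi_mul_I]

lemma om'_cube : om'^3 = 1 := by
  rw [om', ← Complex.exp_nat_mul]
  have h : ((3:ℕ):ℂ) * (-(α:ℂ) * Complex.I) = -(2 * (Real.pi:ℂ) * Complex.I) := by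
    have hα : (α:ℝ) = 2*Real.pi/3 := rfl
    rw [hα]; push_cast; ring
  rw [h, Complex.exp_neg, Complex.exp_two_pi_mul_I, inv_one]

def W : ℂ → ℂ := fun z => om' * Ai' (om' * z) * Ai (om * z) - om * Ai' (om * z) * Ai (om' * z)

lemma hW (z : ℂ) : HasDerivAt W 0 z := by
  have hmul : ∀ c : ℂ, HasDerivAt (fun z : ℂ => c * z) c z := fun c => by
    simpa using (hasDerivAt_id z).const_mul c
  have hA : HasDerivAt (fun z : ℂ => Ai (om' * z)) (Ai' (om' * z) * om') z :=
    HasDerivAt.comp z (hasDerivAt_Ai (om' * z)) (hmul om')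
  have hB : HasDerivAt (fun z : ℂ => Ai (om * z)) (Ai' (om * z) * om) z :=
    HasDerivAt.comp z (hasDerivAt_Ai (om * z)) (hmul om)
  have hA' : HasDerivAt (fun z : ℂ => Ai' (om' * z)) (((om' * z) * Ai (om' * z)) * om') z :=
    HasDerivAt.comp z (hasDerivAt_Ai' (om' * z)) (hmul om')
  have hB' : HasDerivAt (fun z : ℂ => Ai' (om * z)) (((om * z) * Ai (om * z)) * om) z :=
    HasDerivAt.comp z (hasDerivAt_Ai' (om * z)) (hmul om)
  have hT1 := (hA'.const_mul om').mul hB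
  have hT2 := (hB'.const_mul om).mul hA
  have hWd := hT1.sub hT2
  have hval : om' * ((om' * z) * Ai (om' * z) * om') * Ai (om * z)
        + om' * Ai' (om' * z) * (Ai' (om * z) * om)
      - (om * ((om * z) * Ai (om * z) * om) * Ai (om' * z)
        + om * Ai' (om * z) * (Ai' (om' * z) * om')) = 0 := by
    have h1 := om_cube
    have h2 := om'_cube
    linear_combination (z * Ai (om' * z) * Ai (om * z)) * h2
      - (z * Ai (om * z) * Ai (om' * z)) * h1
  rw [hval] at hWd
  exact hWd

lemma W_const (z : ℂ) : W z = W 0 := by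
  apply is_const_of_fderiv_eq_zero (𝕜 := ℂ)
  · exact fun x => (hW x).differentiableAt
  · intro x
    have h : fderiv ℂ W x = ContinuousLinearMap.smulRight (1 : ℂ →L[ℂ] ℂ) (0:ℂ) :=
      (hasDerivAt_iff_hasFDerivAt.mp (hW x)).fderiv
    rw [h]
    ext v
    simp

lemma Ai_zero : Ai 0 = ((c0:ℝ) : ℂ) := by
  rw [Ai_eq_pt, ofScalarsSum_zero]
  show a 0 • 1 = _
  simp [a]

lemma Ai'_zero : Ai' 0 = ((c1:ℝ) : ℂ) := by
  rw [Ai'_eq_pt, ofScalarsSum_zero]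
  show a1 0 • 1 = _
  norm_num [a1]
  simp [a]

lemma sin_alpha : Real.sin α = Real.sqrt 3 / 2 := by
  have hα : (α:ℝ) = Real.pi - Real.pi/3 := by rw [α]; ring
  rw [hα, Real.sin_pi_sub, Real.sin_pi_div_three]

lemma c1c0 : c1 * c0 = -(Real.sqrt 3) / (6 * Real.pi) := by
  have hG := Real.Gamma_mul_Gamma_one_sub (1/3)
  have h23 : (1:ℝ) - 1/3 = 2/3 := by norm_num
  rw [h23] at hG
  have hs : Real.sin (Real.pi * (1/3)) = Real.sqrt 3 / 2 := by
    rw [show Real.pi * (1/3) = Real.pi / 3 by ring, Real.sin_pi_div_three]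
  rw [hs] at hG
  have hpow : (3:ℝ)^(-(1:ℝ)/3) * (3:ℝ)^(-(2:ℝ)/3) = 1/3 := by
    rw [← Real.rpow_add (by norm_num : (0:ℝ) < 3),
      show (-(1:ℝ)/3 + -(2:ℝ)/3) = -1 by norm_num,
      Real.rpow_neg_one]
    norm_num
  have hg1 : 0 < Real.Gamma (1/3) := Real.Gamma_pos_of_pos (by norm_num)
  have hg2 : 0 < Real.Gamma (2/3) := Real.Gamma_pos_of_pos (by norm_num)
  have hpi : 0 < Real.pi := Real.pi_pos
  have hsq : 0 < Real.sqrt 3 := Real.sqrt_pos.mpr (by norm_num)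
  have h3 : Real.sqrt 3 * Real.sqrt 3 = 3 := Real.mul_self_sqrt (by norm_num)
  rw [c0, c1]
  have hGkey : Real.Gamma (1/3) * Real.Gamma (2/3) * Real.sqrt 3 = 2 * Real.pi := by
    have hne : Real.sqrt 3 / 2 ≠ 0 := by positivity
    field_simp at hG
    nlinarith [hG]
  field_simp
  nlinarith [hGkey, hpow, h3, hg1, hg2, hpi, hsq]

lemma final_eq : om' * ((c1:ℝ):ℂ) * ((c0:ℝ):ℂ) - om * ((c1:ℝ):ℂ) * ((c0:ℝ):ℂ)
    = Complex.I / (2 * (Real.pi:ℂ)) := by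
  have hω : om = Complex.cos (α:ℂ) + Complex.sin (α:ℂ) * Complex.I := by
    rw [om]; exact Complex.exp_mul_I _
  have hω' : om' = Complex.cos (α:ℂ) - Complex.sin (α:ℂ) * Complex.I := by
    rw [om', show -(α:ℂ) = ((-α : ℝ) : ℂ) by push_cast; ring, Complex.exp_mul_I]
    push_cast
    rw [Complex.cos_neg, Complex.sin_neg]
    ring
  have hsin : Complex.sin (α:ℂ) = ((Real.sqrt 3 / 2 : ℝ) : ℂ) := by
    rw [← Complex.ofReal_sin, sin_alpha]
  have hc : ((c1:ℝ):ℂ) * ((c0:ℝ):ℂ) = ((-(Real.sqrt 3) / (6 * Real.pi) : ℝ) : ℂ) := by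
    rw [← Complex.ofReal_mul, c1c0]
  have h3 : ((Real.sqrt 3 : ℝ):ℂ) * ((Real.sqrt 3 : ℝ):ℂ) = 3 := by
    rw [← Complex.ofReal_mul, Real.mul_self_sqrt (by norm_num)]
    norm_num
  have hpi : ((Real.pi:ℝ):ℂ) ≠ 0 := Complex.ofReal_ne_zero.mpr Real.pi_ne_zero
  calc om' * ((c1:ℝ):ℂ) * ((c0:ℝ):ℂ) - om * ((c1:ℝ):ℂ) * ((c0:ℝ):ℂ)
      = (om' - om) * (((c1:ℝ):ℂ) * ((c0:ℝ):ℂ)) := by ring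
    _ = (-2 * ((Real.sqrt 3 / 2 : ℝ):ℂ) * Complex.I) *
        ((-(Real.sqrt 3) / (6 * Real.pi) : ℝ) : ℂ) := by
        rw [hω, hω', hsin, hc]; ring
    _ = Complex.I / (2 * (Real.pi:ℂ)) := by
        push_cast
        have hstep : (-2 * (((Real.sqrt 3:ℝ):ℂ)/2) * Complex.I) *
            (-((Real.sqrt 3:ℝ):ℂ)/(6*((Real.pi:ℝ):ℂ)))
            = (((Real.sqrt 3:ℝ):ℂ)*((Real.sqrt 3:ℝ):ℂ)) * Complex.I / (6 * ((Real.pi:ℝ):ℂ)) := by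
          ring
        rw [hstep, h3]
        field_simp
        ring

end AiryAux

open AiryAux in
/-- The Wronskian identity:
`e^{-iα} Ai'(e^{-iα}z) Ai(e^{iα}z) − e^{iα} Ai'(e^{iα}z) Ai(e^{-iα}z) = i/(2π)` for all `z ∈ ℂ`. -/
theorem airy_wronskian (z : ℂ) :
    Complex.exp (-(α:ℂ) * Complex.I) * Ai' (Complex.exp (-(α:ℂ) * Complex.I) * z) *
        Ai (Complex.exp ((α:ℂ) * Complex.I) * z)
      - Complex.exp ((α:ℂ) * Complex.I) * Ai' (Complex.exp ((α:ℂ) * Complex.I) * z) *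
        Ai (Complex.exp (-(α:ℂ) * Complex.I) * z)
    = Complex.I / (2 * Real.pi) := by
  have h := W_const z
  show W z = _
  rw [h]
  show om' * Ai' (om' * 0) * Ai (om * 0) - om * Ai' (om * 0) * Ai (om' * 0) = _
  rw [mul_zero, mul_zero, Ai_zero, Ai'_zero]
  exact final_eq

end
end

section
/- For every λ ∈ ℂ, the derivative of f satisfies f'(λ) = −iλ + 4πλ·e^{2iα}·Ai'(e^{-iα}λ)·Ai(e^{iα}λ). In particular, if Ai'(e^{-iα}λ) = 0 then f'(λ) = −iλ. -/
noncomputable section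

open Finset

/-- Generic summability for "lacunary polynomial-type" series. -/
lemma summable_poly (c : ℕ → ℂ) (e : ℕ → ℕ) (C B : ℝ) (hB0 : 0 ≤ B)
    (he : ∀ k, e k ≤ 3*k+3)
    (hc : ∀ k, ‖c k‖ * (k.factorial : ℝ) ≤ C * B^k) (z : ℂ) :
    Summable fun k => c k * z ^ e k := by
  set r : ℝ := ‖z‖ + 1 with hrdef
  have hr1 : (1:ℝ) ≤ r := by by_cases h : True; all_goals linarith [norm_nonneg z]
  have hr0 : (0:ℝ) ≤ r := by linarith
  have hzr : ‖z‖ ≤ r := by simp [hrdef]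
  apply Summable.of_norm_bounded (g := fun k => (C * r^3) * ((B * r^3)^k / k.factorial))
  · exact ((Real.summable_pow_div_factorial (B * r^3)).mul_left _)
  · intro k
    have hfk : (0:ℝ) < (k.factorial : ℝ) := by positivity
    have h1 : ‖c k * z ^ e k‖ = ‖c k‖ * ‖z‖ ^ e k := by
      rw [norm_mul, norm_pow]
    have h2 : ‖z‖ ^ e k ≤ r ^ (3*k+3) := by
      calc ‖z‖ ^ e k ≤ r ^ e k := pow_le_pow_left₀ (norm_nonneg z) hzr _
        _ ≤ r ^ (3*k+3) := pow_le_pow_right₀ hr1 (he k)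
    have h3 : ‖c k‖ ≤ C * B^k / k.factorial := by
      rw [le_div_iff₀ hfk]; exact hc k
    calc ‖c k * z ^ e k‖ ≤ (C * B^k / k.factorial) * r ^ (3*k+3) := by
          rw [h1]; have hCB : (0:ℝ) ≤ C * B^k := le_trans (by positivity) (hc k)
          exact mul_le_mul h3 h2 (by positivity) (div_nonneg hCB hfk.le)
      _ = (C * r^3) * ((B * r^3)^k / k.factorial) := by
          rw [pow_add, pow_mul, mul_pow]; ring

/-- Generic termwise differentiation for "lacunary polynomial-type" series. -/
lemma hasDerivAt_poly (c : ℕ → ℂ) (e : ℕ → ℕ) (C B : ℝ) (hB0 : 0 ≤ B)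
    (he : ∀ k, e k ≤ 3*k+3)
    (hc : ∀ k, ‖c k‖ * (k.factorial : ℝ) ≤ C * B^k) (z : ℂ) :
    HasDerivAt (fun w => ∑' k, c k * w ^ e k)
      (∑' k, c k * ((e k : ℂ) * z ^ (e k - 1))) z := by
  set r : ℝ := ‖z‖ + 1 with hrdef
  have hr1 : (1:ℝ) ≤ r := by rw [hrdef]; linarith [norm_nonneg z]
  have hr0 : (0:ℝ) < r := by linarith
  have hC0 : (0:ℝ) ≤ C := by
    have := le_trans (by positivity : (0:ℝ) ≤ ‖c 0‖ * (Nat.factorial 0 : ℝ)) (hc 0)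
    simpa using this
  refine hasDerivAt_tsum_of_isPreconnected
    (u := fun k => (3*C*r^3) * ((2*B*r^3)^k / k.factorial))
    (t := Metric.ball (0:ℂ) r) (y₀ := (0:ℂ))
    (g := fun k w => c k * w ^ e k)
    (g' := fun k y => c k * ((e k : ℂ) * y ^ (e k - 1)))
    ?_ ?_ ?_ ?_ ?_ ?_ ?_ ?_
  · exact (Real.summable_pow_div_factorial (2*B*r^3)).mul_left _
  · exact Metric.isOpen_ball
  · exact (convex_ball (0:ℂ) r).isPreconnected
  · intro k y _
    exact (hasDerivAt_pow (e k) y).const_mul (c k)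
  · intro k y hy
    have hyr : ‖y‖ ≤ r := by
      have := Metric.mem_ball.1 hy; rw [dist_zero_right] at this; linarith
    have hfk : (0:ℝ) < (k.factorial : ℝ) := by positivity
    have h3 : ‖c k‖ ≤ C * B^k / k.factorial := by
      rw [le_div_iff₀ hfk]; exact hc k
    have h2 : ‖y‖ ^ (e k - 1) ≤ r ^ (3*k+3) := by
      calc ‖y‖ ^ (e k - 1) ≤ r ^ (e k - 1) := pow_le_pow_left₀ (norm_nonneg y) hyr _
        _ ≤ r ^ (3*k+3) := pow_le_pow_right₀ hr1 (by have := he k; omega)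
    have hek : ((e k : ℝ)) ≤ 3*((k:ℝ)+1) := by
      have h := he k
      have : ((e k : ℝ)) ≤ ((3*k+3 : ℕ) : ℝ) := Nat.cast_le.2 h
      push_cast at this; linarith
    have hkk : ((k:ℝ)+1) ≤ 2^k := by
      have : (k+1 : ℕ) ≤ 2^k := Nat.succ_le_of_lt (Nat.lt_two_pow_self (n := k))
      exact_mod_cast this
    have hCB : (0:ℝ) ≤ C * B^k := le_trans (by positivity) (hc k)
    calc ‖c k * ((e k : ℂ) * y ^ (e k - 1))‖
        = ‖c k‖ * ((e k : ℝ) * ‖y‖ ^ (e k - 1)) := by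
          rw [norm_mul, norm_mul, norm_pow, Complex.norm_natCast]
      _ ≤ (C * B^k / k.factorial) * ((3*(k+1)) * r ^ (3*k+3)) := by
          apply mul_le_mul h3 _ (by positivity) (div_nonneg hCB hfk.le)
          exact mul_le_mul hek h2 (by positivity) (by linarith)
      _ ≤ (C * B^k / k.factorial) * ((3*2^k) * r ^ (3*k+3)) := by
          apply mul_le_mul_of_nonneg_left _ (div_nonneg hCB hfk.le)
          apply mul_le_mul_of_nonneg_right _ (by positivity)
          linarith
      _ = (3*C*r^3) * ((2*B*r^3)^k / k.factorial) := by
          rw [pow_add, pow_mul, mul_pow, mul_pow]; ring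
  · exact Metric.mem_ball_self hr0
  · exact summable_poly c e C B hB0 he hc 0
  · rw [Metric.mem_ball, dist_zero_right]; rw [hrdef]; linarith

lemma summable_poly_deriv (c : ℕ → ℂ) (e : ℕ → ℕ) (C B : ℝ) (hB0 : 0 ≤ B)
    (he : ∀ k, e k ≤ 3*k+3)
    (hc : ∀ k, ‖c k‖ * (k.factorial : ℝ) ≤ C * B^k) (z : ℂ) :
    Summable fun k => c k * ((e k : ℂ) * z ^ (e k - 1)) := by
  have hC0 : (0:ℝ) ≤ C := by
    have := le_trans (by positivity : (0:ℝ) ≤ ‖c 0‖ * (Nat.factorial 0 : ℝ)) (hc 0)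
    simpa using this
  have h := summable_poly (fun k => c k * (e k : ℂ)) (fun k => e k - 1) (3*C) (2*B)
    (by positivity) (fun k => by show e k - 1 ≤ 3*k+3; have := he k; omega) (fun k => ?_) z
  · exact h.congr fun k => by rw [mul_assoc]
  · have hek : ((e k : ℝ)) ≤ 3*((k:ℝ)+1) := by
      have h := he k
      have : ((e k : ℝ)) ≤ ((3*k+3 : ℕ) : ℝ) := Nat.cast_le.2 h
      push_cast at this; linarith
    have hkk : ((k:ℝ)+1) ≤ 2^k := by
      have : (k+1 : ℕ) ≤ 2^k := Nat.succ_le_of_lt (Nat.lt_two_pow_self (n := k))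
      exact_mod_cast this
    have hCB : (0:ℝ) ≤ C * B^k := le_trans (by positivity) (hc k)
    calc ‖c k * (e k : ℂ)‖ * (k.factorial : ℝ)
        = (‖c k‖ * (k.factorial : ℝ)) * (e k : ℝ) := by
          rw [norm_mul, Complex.norm_natCast]; ring
      _ ≤ (C * B^k) * (3*((k:ℝ)+1)) := by
          apply mul_le_mul (hc k) hek (by positivity)
          exact hCB
      _ ≤ (C * B^k) * (3*2^k) := by
          apply mul_le_mul_of_nonneg_left _ hCB; linarith
      _ = (3*C) * (2*B)^k := by rw [mul_pow]; ring

def p1 (k : ℕ) : ℕ := ∏ j ∈ Finset.range k, (3*j+1)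
def p2 (k : ℕ) : ℕ := ∏ j ∈ Finset.range k, (3*j+2)

lemma p1_succ (k : ℕ) : p1 (k+1) = p1 k * (3*k+1) := Finset.prod_range_succ _ _
lemma p2_succ (k : ℕ) : p2 (k+1) = p2 k * (3*k+2) := Finset.prod_range_succ _ _

lemma p1_fact (k : ℕ) : p1 k * k.factorial ≤ (3*k).factorial := by
  induction k with
  | zero => simp [p1]
  | succ n ih =>
    rw [p1_succ, Nat.factorial_succ]
    calc p1 n * (3*n+1) * ((n+1) * n.factorial)
        = (p1 n * n.factorial) * ((3*n+1)*(n+1)) := by ring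
      _ ≤ (3*n).factorial * ((3*n+1)*(n+1)) := Nat.mul_le_mul_right _ ih
      _ ≤ (3*n).factorial * ((3*n+1)*((3*n+2)*(3*n+3))) := by
          apply Nat.mul_le_mul_left
          apply Nat.mul_le_mul_left
          nlinarith
      _ = (3*(n+1)).factorial := by
          have h1 : (3*n+3).factorial = (3*n+3) * (3*n+2).factorial := Nat.factorial_succ (3*n+2)
          have h2 : (3*n+2).factorial = (3*n+2) * (3*n+1).factorial := Nat.factorial_succ (3*n+1)
          have h3 : (3*n+1).factorial = (3*n+1) * (3*n).factorial := Nat.factorial_succ (3*n)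
          have : 3*(n+1) = 3*n+3 := by ring
          rw [this, h1, h2, h3]; ring

lemma p2_fact (k : ℕ) : p2 k * k.factorial ≤ (3*k+1).factorial := by
  induction k with
  | zero => simp [p2]
  | succ n ih =>
    rw [p2_succ, Nat.factorial_succ]
    calc p2 n * (3*n+2) * ((n+1) * n.factorial)
        = (p2 n * n.factorial) * ((3*n+2)*(n+1)) := by ring
      _ ≤ (3*n+1).factorial * ((3*n+2)*(n+1)) := Nat.mul_le_mul_right _ ih
      _ ≤ (3*n+1).factorial * ((3*n+2)*((3*n+3)*(3*n+4))) := by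
          apply Nat.mul_le_mul_left
          apply Nat.mul_le_mul_left
          nlinarith
      _ = (3*(n+1)+1).factorial := by
          have h1 : (3*n+4).factorial = (3*n+4) * (3*n+3).factorial := Nat.factorial_succ (3*n+3)
          have h2 : (3*n+3).factorial = (3*n+3) * (3*n+2).factorial := Nat.factorial_succ (3*n+2)
          have h3 : (3*n+2).factorial = (3*n+2) * (3*n+1).factorial := Nat.factorial_succ (3*n+1)
          have : 3*(n+1)+1 = 3*n+4 := by ring
          rw [this, h1, h2, h3]; ring

def t1 (k : ℕ) : ℂ := (p1 k : ℂ) / ((3*k).factorial : ℂ)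
def t2 (k : ℕ) : ℂ := (p2 k : ℂ) / ((3*k+1).factorial : ℂ)
def s1 (k : ℕ) : ℂ := (p1 (k+1) : ℂ) / ((3*k+2).factorial : ℂ)
def s2 (k : ℕ) : ℂ := (p2 k : ℂ) / ((3*k).factorial : ℂ)

lemma norm_nat_div (a b : ℕ) : ‖((a:ℂ)/(b:ℂ))‖ = (a:ℝ)/(b:ℝ) := by
  rw [norm_div, Complex.norm_natCast, Complex.norm_natCast]

lemma one_le_two_pow_real (k : ℕ) : (1:ℝ) ≤ 2^k := by
  exact_mod_cast Nat.one_le_two_pow (n := k)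

lemma t1_bd (k : ℕ) : ‖t1 k‖ * (k.factorial : ℝ) ≤ 3 * 2^k := by
  rw [t1, norm_nat_div]
  have hb : (0:ℝ) < ((3*k).factorial : ℝ) := by positivity
  have h : (p1 k : ℝ) * (k.factorial : ℝ) ≤ ((3*k).factorial : ℝ) := by
    exact_mod_cast p1_fact k
  have : (p1 k : ℝ)/((3*k).factorial : ℝ) * (k.factorial : ℝ) ≤ 1 := by
    rw [div_mul_eq_mul_div, div_le_one hb]; simpa using h
  calc (p1 k : ℝ)/((3*k).factorial : ℝ) * (k.factorial : ℝ) ≤ 1 := this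
    _ ≤ 3*2^k := by have := one_le_two_pow_real k; linarith

lemma t2_bd (k : ℕ) : ‖t2 k‖ * (k.factorial : ℝ) ≤ 3 * 2^k := by
  rw [t2, norm_nat_div]
  have hb : (0:ℝ) < ((3*k+1).factorial : ℝ) := by positivity
  have h : (p2 k : ℝ) * (k.factorial : ℝ) ≤ ((3*k+1).factorial : ℝ) := by
    exact_mod_cast p2_fact k
  have : (p2 k : ℝ)/((3*k+1).factorial : ℝ) * (k.factorial : ℝ) ≤ 1 := by
    rw [div_mul_eq_mul_div, div_le_one hb]; simpa using h
  calc (p2 k : ℝ)/((3*k+1).factorial : ℝ) * (k.factorial : ℝ) ≤ 1 := this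
    _ ≤ 3*2^k := by have := one_le_two_pow_real k; linarith

lemma s1_bd (k : ℕ) : ‖s1 k‖ * (k.factorial : ℝ) ≤ 3 * 2^k := by
  rw [s1, norm_nat_div]
  have hb : (0:ℝ) < ((3*k+2).factorial : ℝ) := by positivity
  have hnat : p1 (k+1) * k.factorial ≤ 3 * (3*k+2).factorial := by
    have h := p1_fact (k+1)
    rw [Nat.factorial_succ] at h
    have h2 : (3*(k+1)).factorial = (3*k+3) * (3*k+2).factorial := by
      rw [show 3*(k+1) = (3*k+2)+1 by ring, Nat.factorial_succ]
    rw [h2] at h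
    -- p1 (k+1) * ((k+1) * k!) ≤ (3k+3) * (3k+2)!
    have h3 : p1 (k+1) * k.factorial * (k+1) ≤ (3 * (3*k+2).factorial) * (k+1) := by
      calc p1 (k+1) * k.factorial * (k+1) = p1 (k+1) * ((k+1) * k.factorial) := by ring
        _ ≤ (3*k+3) * (3*k+2).factorial := h
        _ = (3 * (3*k+2).factorial) * (k+1) := by ring
    exact Nat.le_of_mul_le_mul_right h3 (Nat.succ_pos k)
  have h : (p1 (k+1) : ℝ) * (k.factorial : ℝ) ≤ 3 * ((3*k+2).factorial : ℝ) := by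
    exact_mod_cast hnat
  have : (p1 (k+1) : ℝ)/((3*k+2).factorial : ℝ) * (k.factorial : ℝ) ≤ 3 := by
    rw [div_mul_eq_mul_div, div_le_iff₀ hb]; linarith
  calc (p1 (k+1) : ℝ)/((3*k+2).factorial : ℝ) * (k.factorial : ℝ) ≤ 3 := this
    _ ≤ 3*2^k := by have := one_le_two_pow_real k; linarith

lemma s2_bd (k : ℕ) : ‖s2 k‖ * (k.factorial : ℝ) ≤ 3 * 2^k := by
  rw [s2, norm_nat_div]
  have hb : (0:ℝ) < ((3*k).factorial : ℝ) := by positivity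
  have hnat : p2 k * k.factorial ≤ (3*k+1) * (3*k).factorial := by
    have h := p2_fact k
    rwa [show 3*k+1 = (3*k)+1 from rfl, Nat.factorial_succ] at h
  have h : (p2 k : ℝ) * (k.factorial : ℝ) ≤ ((3*k:ℕ)+1 : ℝ) * ((3*k).factorial : ℝ) := by
    exact_mod_cast hnat
  have hk2 : ((3*k:ℕ) + 1 : ℝ) ≤ 3*2^k := by
    have : (k+1 : ℕ) ≤ 2^k := Nat.succ_le_of_lt (Nat.lt_two_pow_self (n := k))
    have h2 : ((k:ℝ)+1) ≤ 2^k := by exact_mod_cast this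
    push_cast; linarith
  have : (p2 k : ℝ)/((3*k).factorial : ℝ) * (k.factorial : ℝ) ≤ (3*k:ℕ)+1 := by
    rw [div_mul_eq_mul_div, div_le_iff₀ hb]; linarith
  exact this.trans hk2

lemma aux1 (a b c : ℂ) (hb : b ≠ 0) (hc : c ≠ 0) : a / (b * c) * b = a / c := by
  field_simp

lemma aux3 (a b c d : ℂ) (hb : b ≠ 0) (hc : c ≠ 0) (hd : d ≠ 0) :
    (a * b) / (c * (b * d)) * c = a / d := by
  field_simp

lemma fact_cast_ne (n : ℕ) : ((n.factorial : ℂ)) ≠ 0 :=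
  Nat.cast_ne_zero.mpr (Nat.factorial_ne_zero n)

lemma nat_cast_ne (n : ℕ) (h : n ≠ 0) : ((n : ℂ)) ≠ 0 := Nat.cast_ne_zero.mpr h

lemma fact_succ_cast (n : ℕ) : ((n+1).factorial : ℂ) = ((n+1 : ℕ) : ℂ) * (n.factorial : ℂ) := by
  exact_mod_cast Nat.factorial_succ n

lemma coeff1 (m : ℕ) : t1 (m+1) * ((3*(m+1) : ℕ) : ℂ) = s1 m := by
  rw [t1, s1, show (3*(m+1) : ℕ) = (3*m+2)+1 by ring, fact_succ_cast]
  exact aux1 _ _ _ (nat_cast_ne _ (by omega)) (fact_cast_ne _)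

lemma coeff2 (k : ℕ) : t2 k * ((3*k+1 : ℕ) : ℂ) = s2 k := by
  rw [t2, s2, show (3*k+1 : ℕ) = (3*k)+1 from rfl, fact_succ_cast]
  exact aux1 _ _ _ (nat_cast_ne _ (by omega)) (fact_cast_ne _)

lemma coeff3 (k : ℕ) : s1 k * ((3*k+2 : ℕ) : ℂ) = t1 k := by
  rw [s1, t1, show (3*k+2 : ℕ) = (3*k+1)+1 from rfl, fact_succ_cast,
    show (3*k+1 : ℕ) = (3*k)+1 from rfl, fact_succ_cast]
  have hp : (p1 (k+1) : ℂ) = (p1 k : ℂ) * (((3*k)+1 : ℕ) : ℂ) := by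
    exact_mod_cast p1_succ k
  rw [hp]
  exact aux3 _ _ _ _ (nat_cast_ne _ (by omega)) (nat_cast_ne _ (by omega)) (fact_cast_ne _)

lemma coeff4 (m : ℕ) : s2 (m+1) * ((3*(m+1) : ℕ) : ℂ) = t2 m := by
  rw [s2, t2, show (3*(m+1) : ℕ) = (3*m+2)+1 by ring, fact_succ_cast,
    show (3*m+2 : ℕ) = (3*m+1)+1 from rfl, fact_succ_cast]
  have hp : (p2 (m+1) : ℂ) = (p2 m : ℂ) * (((3*m+1)+1 : ℕ) : ℂ) := by
    have := p2_succ m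
    exact_mod_cast this
  rw [hp]
  exact aux3 _ _ _ _ (nat_cast_ne _ (by omega)) (nat_cast_ne _ (by omega)) (fact_cast_ne _)

def c1 : ℂ := (((3 : ℝ) ^ (-(2:ℝ)/3) / Real.Gamma (2/3) : ℝ) : ℂ)
def c2 : ℂ := ((-((3 : ℝ) ^ (-(1:ℝ)/3)) / Real.Gamma (1/3) : ℝ) : ℂ)

lemma Ai_eq (z : ℂ) :
    Ai z = c1 * ∑' k, t1 k * z^(3*k) + c2 * ∑' k, t2 k * z^(3*k+1) := by
  rw [Ai, c1, c2]
  congr 2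
  · exact tsum_congr fun k => by
      rw [t1, p1]; push_cast; rw [mul_div_right_comm]
  · exact tsum_congr fun k => by
      rw [t2, p2]; push_cast; rw [mul_div_right_comm]

def AiD (z : ℂ) : ℂ := c1 * ∑' k, s1 k * z^(3*k+2) + c2 * ∑' k, s2 k * z^(3*k)

lemma hasDerivAt_Ai (z : ℂ) : HasDerivAt Ai (AiD z) z := by
  have h1 := hasDerivAt_poly t1 (fun k => 3*k) 3 2 (by norm_num)
    (fun k => by show 3*k ≤ 3*k+3; omega) t1_bd z
  have h2 := hasDerivAt_poly t2 (fun k => 3*k+1) 3 2 (by norm_num)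
    (fun k => by show 3*k+1 ≤ 3*k+3; omega) t2_bd z
  have H := (h1.const_mul c1).add (h2.const_mul c2)
  have hfun : (fun w => c1 * ∑' k, t1 k * w^(3*k) + c2 * ∑' k, t2 k * w^(3*k+1)) = Ai :=
    funext fun w => (Ai_eq w).symm
  rw [← hfun]
  refine H.congr_deriv (Eq.symm ?_)
  rw [AiD]
  congr 1
  · congr 1
    have hs : Summable (fun k => t1 k * (((3*k:ℕ) : ℂ) * z^(3*k-1))) :=
      summable_poly_deriv t1 (fun k => 3*k) 3 2 (by norm_num)
        (fun k => by show 3*k ≤ 3*k+3; omega) t1_bd z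
    rw [Summable.tsum_eq_zero_add hs]
    have h0 : t1 0 * (((3*0:ℕ):ℂ) * z^(3*0-1)) = 0 := by norm_num
    rw [h0, zero_add]
    exact tsum_congr fun m => by
      have he : 3*(m+1)-1 = 3*m+2 := by omega
      rw [he, ← coeff1 m]; ring
  · congr 1
    exact tsum_congr fun k => by
      have he : 3*k+1-1 = 3*k := by omega
      rw [he, ← coeff2 k]; ring

lemma Ai'_eq (z : ℂ) : Ai' z = AiD z := (hasDerivAt_Ai z).deriv

lemma hasDerivAt_Ai' (z : ℂ) : HasDerivAt Ai' (z * Ai z) z := by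
  have h1 := hasDerivAt_poly s1 (fun k => 3*k+2) 3 2 (by norm_num)
    (fun k => by show 3*k+2 ≤ 3*k+3; omega) s1_bd z
  have h2 := hasDerivAt_poly s2 (fun k => 3*k) 3 2 (by norm_num)
    (fun k => by show 3*k ≤ 3*k+3; omega) s2_bd z
  have H := (h1.const_mul c1).add (h2.const_mul c2)
  have hfun : (fun w => c1 * ∑' k, s1 k * w^(3*k+2) + c2 * ∑' k, s2 k * w^(3*k)) = Ai' := by
    funext w; rw [Ai'_eq, AiD]
  rw [← hfun]
  refine H.congr_deriv (Eq.symm ?_)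
  rw [Ai_eq, mul_add]
  congr 1
  · rw [show z * (c1 * ∑' k, t1 k * z^(3*k)) = c1 * ∑' k, z * (t1 k * z^(3*k)) by
      rw [tsum_mul_left]; ring]
    congr 1
    exact tsum_congr fun k => by
      have he : 3*k+2-1 = 3*k+1 := by omega
      rw [he, ← coeff3 k, pow_succ]; ring
  · rw [show z * (c2 * ∑' k, t2 k * z^(3*k+1)) = c2 * ∑' k, z * (t2 k * z^(3*k+1)) by
      rw [tsum_mul_left]; ring]
    congr 1
    have hs : Summable (fun k => s2 k * (((3*k:ℕ) : ℂ) * z^(3*k-1))) :=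
      summable_poly_deriv s2 (fun k => 3*k) 3 2 (by norm_num)
        (fun k => by show 3*k ≤ 3*k+3; omega) s2_bd z
    rw [Summable.tsum_eq_zero_add hs]
    have h0 : s2 0 * (((3*0:ℕ):ℂ) * z^(3*0-1)) = 0 := by norm_num
    rw [h0, zero_add]
    exact (tsum_congr fun m => by
      have he : 3*(m+1)-1 = 3*m+2 := by omega
      rw [he, ← coeff4 m, pow_succ]
      ring).symm

lemma Ai_zero : Ai 0 = c1 := by
  rw [Ai_eq]
  have h1 : ∑' k, t1 k * (0:ℂ)^(3*k) = 1 := by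
    rw [tsum_eq_single 0 (fun k hk => by rw [zero_pow (by omega), mul_zero])]
    simp [t1, p1]
  have h2 : ∑' (k:ℕ), t2 k * (0:ℂ)^(3*k+1) = 0 := by
    have h : ∀ k:ℕ, t2 k * (0:ℂ)^(3*k+1) = 0 := fun k => by
      rw [zero_pow (by omega), mul_zero]
    rw [tsum_congr h]; exact tsum_zero
  rw [h1, h2]; ring

lemma Ai'_zero : Ai' 0 = c2 := by
  rw [Ai'_eq, AiD]
  have h1 : ∑' (k:ℕ), s1 k * (0:ℂ)^(3*k+2) = 0 := by
    have h : ∀ k:ℕ, s1 k * (0:ℂ)^(3*k+2) = 0 := fun k => by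
      rw [zero_pow (by omega), mul_zero]
    rw [tsum_congr h]; exact tsum_zero
  have h2 : ∑' k, s2 k * (0:ℂ)^(3*k) = 1 := by
    rw [tsum_eq_single 0 (fun k hk => by rw [zero_pow (by omega), mul_zero])]
    simp [s2, p2]
  rw [h1, h2]; ring

/-- f(λ) = 2π Ai'(e^{-iα}λ) Ai'(e^{iα}λ). -/
def f (lam : ℂ) : ℂ :=
  2 * Real.pi * Ai' (Complex.exp (-(α:ℂ) * Complex.I) * lam) *
    Ai' (Complex.exp ((α:ℂ) * Complex.I) * lam)

def ω : ℂ := Complex.exp ((α:ℂ) * Complex.I)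
def ω' : ℂ := Complex.exp (-(α:ℂ) * Complex.I)

lemma omega_mul : ω * ω' = 1 := by
  rw [ω, ω', ← Complex.exp_add,
    show (α:ℂ)*Complex.I + -(α:ℂ)*Complex.I = 0 by ring, Complex.exp_zero]

lemma omega_cube : ω^3 = 1 := by
  rw [ω, ← Complex.exp_nat_mul]
  rw [show (3:ℕ) * ((α:ℂ)*Complex.I) = 2*(Real.pi:ℂ)*Complex.I by
    rw [α]; push_cast; ring]
  exact Complex.exp_two_pi_mul_I

lemma omega'_cube : ω'^3 = 1 := by
  have h : (ω*ω')^3 = 1 := by rw [omega_mul]; norm_num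
  rw [mul_pow, omega_cube, one_mul] at h
  exact h

lemma omega_ne : ω ≠ 0 := Complex.exp_ne_zero _
lemma omega'_ne : ω' ≠ 0 := Complex.exp_ne_zero _

lemma omega'_sq : ω'^2 = ω := by
  have h : ω'^2 * ω' = ω * ω' := by
    rw [omega_mul, show ω'^2*ω' = ω'^3 by ring, omega'_cube]
  exact mul_right_cancel₀ omega'_ne h

lemma omega_sq : ω^2 = ω' := by
  have h : ω^2 * ω = ω' * ω := by
    rw [mul_comm ω' ω, omega_mul, show ω^2*ω = ω^3 by ring, omega_cube]
  exact mul_right_cancel₀ omega_ne h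

lemma sin_alpha : Real.sin α = Real.sqrt 3 / 2 := by
  rw [α, show 2*Real.pi/3 = Real.pi - Real.pi/3 by ring, Real.sin_pi_sub,
    Real.sin_pi_div_three]

lemma omega_sub : ω - ω' = ((Real.sqrt 3 : ℝ) : ℂ) * Complex.I := by
  rw [ω, ω', show -(α:ℂ)*Complex.I = ((-α : ℝ):ℂ)*Complex.I by push_cast; ring,
    Complex.exp_mul_I, Complex.exp_mul_I]
  rw [show Complex.cos ((-α:ℝ):ℂ) = Complex.cos (α:ℂ) by push_cast; rw [Complex.cos_neg],
    show Complex.sin ((-α:ℝ):ℂ) = -Complex.sin (α:ℂ) by push_cast; rw [Complex.sin_neg]]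
  have hs : Complex.sin (α:ℂ) = ((Real.sin α : ℝ) : ℂ) := (Complex.ofReal_sin α).symm
  rw [hs, sin_alpha]
  push_cast
  ring

def Wf (lam : ℂ) : ℂ :=
  Ai (ω'*lam) * (ω * Ai' (ω*lam)) - (ω' * Ai' (ω'*lam)) * Ai (ω*lam)

lemma hasDerivAt_Ai_scaled (c lam : ℂ) :
    HasDerivAt (fun x => Ai (c*x)) (c * Ai' (c*lam)) lam := by
  have hg : HasDerivAt (fun x : ℂ => c*x) (c*1) lam := (hasDerivAt_id lam).const_mul c
  have h := (hasDerivAt_Ai (c*lam)).comp lam hg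
  have h2 : AiD (c*lam) * (c*1) = c * Ai' (c*lam) := by rw [← Ai'_eq]; ring
  rw [h2] at h
  exact h

lemma hasDerivAt_Ai'_scaled (c lam : ℂ) :
    HasDerivAt (fun x => Ai' (c*x)) (c * ((c*lam) * Ai (c*lam))) lam := by
  have hg : HasDerivAt (fun x : ℂ => c*x) (c*1) lam := (hasDerivAt_id lam).const_mul c
  have h := (hasDerivAt_Ai' (c*lam)).comp lam hg
  have h2 : (c*lam) * Ai (c*lam) * (c*1) = c * ((c*lam) * Ai (c*lam)) := by ring
  rw [h2] at h
  exact h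

lemma Wf_deriv (lam : ℂ) : HasDerivAt Wf 0 lam := by
  have h1 := (hasDerivAt_Ai_scaled ω' lam).mul
    ((hasDerivAt_Ai'_scaled ω lam).const_mul ω)
  have h2 := ((hasDerivAt_Ai'_scaled ω' lam).const_mul ω').mul
    (hasDerivAt_Ai_scaled ω lam)
  have H := h1.sub h2
  have hval : (ω' * Ai' (ω'*lam) * (ω * Ai' (ω*lam)) +
      Ai (ω'*lam) * (ω * (ω * (ω*lam * Ai (ω*lam))))) -
      (ω' * (ω' * (ω'*lam * Ai (ω'*lam))) * Ai (ω*lam) +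
      ω' * Ai' (ω'*lam) * (ω * Ai' (ω*lam))) = 0 := by
    linear_combination (lam * Ai (ω'*lam) * Ai (ω*lam)) * omega_cube -
      (lam * Ai (ω'*lam) * Ai (ω*lam)) * omega'_cube
  rw [hval] at H
  exact H

lemma Wf_const (lam : ℂ) : Wf lam = Wf 0 :=
  is_const_of_deriv_eq_zero (fun x => (Wf_deriv x).differentiableAt)
    (fun x => (Wf_deriv x).deriv) lam 0

lemma gamma_prod : Real.Gamma (1/3) * Real.Gamma (2/3) = Real.pi / (Real.sqrt 3 / 2) := by
  have h := Real.Gamma_mul_Gamma_one_sub (1/3)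
  rw [show (1:ℝ)-1/3 = 2/3 by norm_num, show Real.pi * (1/3) = Real.pi/3 by ring,
    Real.sin_pi_div_three] at h
  exact h

lemma const_eq : (2*Real.pi) *
    ((3:ℝ)^(-(2:ℝ)/3)/Real.Gamma (2/3) * (-((3:ℝ)^(-(1:ℝ)/3))/Real.Gamma (1/3))) *
    Real.sqrt 3 = -1 := by
  have hg := gamma_prod
  have h3 : (3:ℝ)^(-(2:ℝ)/3) * (3:ℝ)^(-(1:ℝ)/3) = 1/3 := by
    rw [← Real.rpow_add (by norm_num : (0:ℝ) < 3),
      show (-(2:ℝ)/3 + -(1:ℝ)/3) = -1 by ring]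
    rw [Real.rpow_neg_one]; norm_num
  have hΓ1 : 0 < Real.Gamma (1/3) := Real.Gamma_pos_of_pos (by norm_num)
  have hΓ2 : 0 < Real.Gamma (2/3) := Real.Gamma_pos_of_pos (by norm_num)
  have hπ : 0 < Real.pi := Real.pi_pos
  have hs3 : Real.sqrt 3 * Real.sqrt 3 = 3 := Real.mul_self_sqrt (by norm_num)
  have hs3pos : 0 < Real.sqrt 3 := Real.sqrt_pos.mpr (by norm_num)
  have hG : Real.Gamma (1/3) * Real.Gamma (2/3) * Real.sqrt 3 = 2 * Real.pi := by
    rw [hg, div_mul_eq_mul_div, div_eq_iff (by positivity : (Real.sqrt 3/2) ≠ 0)]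
    ring
  field_simp
  rw [neg_div, neg_div] at h3
  linear_combination (-2*Real.pi*Real.sqrt 3) * h3 + (Real.sqrt 3/3) * hG - (Real.Gamma (1/3)*Real.Gamma (2/3)/3) * hs3

lemma wronskian (lam : ℂ) : 2*(Real.pi:ℂ) * Wf lam = -Complex.I := by
  rw [Wf_const lam]
  have h0 : Wf 0 = c1 * c2 * (ω - ω') := by
    rw [Wf]; rw [mul_zero, mul_zero, Ai_zero, Ai'_zero]; ring
  rw [h0, omega_sub, c1, c2]
  have hc : (2*(Real.pi:ℂ)) * ((((3:ℝ)^(-(2:ℝ)/3)/Real.Gamma (2/3) : ℝ):ℂ) *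
      (((-((3:ℝ)^(-(1:ℝ)/3))/Real.Gamma (1/3) : ℝ)):ℂ)) * ((Real.sqrt 3 : ℝ):ℂ) = -1 := by
    have := const_eq
    have h2 : (((2*Real.pi) * ((3:ℝ)^(-(2:ℝ)/3)/Real.Gamma (2/3) *
        (-((3:ℝ)^(-(1:ℝ)/3))/Real.Gamma (1/3))) * Real.sqrt 3 : ℝ) : ℂ) = ((-1 : ℝ) : ℂ) := by
      exact_mod_cast congrArg (fun x : ℝ => (x:ℂ)) this
    push_cast at h2 ⊢
    linear_combination h2
  linear_combination Complex.I * hc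

lemma exp_two_alpha : Complex.exp (2*(α:ℂ)*Complex.I) = ω^2 := by
  rw [sq, ω, ← Complex.exp_add]; congr 1; ring

/-- For every `λ ∈ ℂ`, `f'(λ) = −iλ + 4πλ e^{2iα} Ai'(e^{-iα}λ) Ai(e^{iα}λ)`;
in particular, if `Ai'(e^{-iα}λ) = 0` then `f'(λ) = −iλ`. -/
theorem deriv_f (lam : ℂ) :
    deriv f lam = -Complex.I * lam + 4 * Real.pi * lam * Complex.exp (2 * (α:ℂ) * Complex.I) *
        Ai' (Complex.exp (-(α:ℂ) * Complex.I) * lam) * Ai (Complex.exp ((α:ℂ) * Complex.I) * lam)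
    ∧ (Ai' (Complex.exp (-(α:ℂ) * Complex.I) * lam) = 0 → deriv f lam = -Complex.I * lam) := by
  have hA := (hasDerivAt_Ai'_scaled ω' lam).const_mul (2*(Real.pi:ℂ))
  have H := hA.mul (hasDerivAt_Ai'_scaled ω lam)
  have Hf : HasDerivAt f
      (2*(Real.pi:ℂ) * (ω' * ((ω'*lam) * Ai (ω'*lam))) * Ai' (ω*lam) +
        (2*(Real.pi:ℂ) * Ai' (ω'*lam)) * (ω * ((ω*lam) * Ai (ω*lam)))) lam := H
  have hW : 2*(Real.pi:ℂ) * (Ai (ω'*lam) * (ω * Ai' (ω*lam)) -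
      ω' * Ai' (ω'*lam) * Ai (ω*lam)) = -Complex.I := wronskian lam
  have hmain : deriv f lam = -Complex.I * lam +
      4 * Real.pi * lam * Complex.exp (2 * (α:ℂ) * Complex.I) *
        Ai' (Complex.exp (-(α:ℂ) * Complex.I) * lam) *
        Ai (Complex.exp ((α:ℂ) * Complex.I) * lam) := by
    rw [show Complex.exp (-(α:ℂ) * Complex.I) = ω' from rfl,
      show Complex.exp ((α:ℂ) * Complex.I) = ω from rfl,
      show Complex.exp (2 * (α:ℂ) * Complex.I) = ω^2 from exp_two_alpha,
      Hf.deriv]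
    linear_combination lam * hW +
      (2*(Real.pi:ℂ)*lam*Ai (ω'*lam)*Ai' (ω*lam)) * omega'_sq -
      (2*(Real.pi:ℂ)*lam*Ai' (ω'*lam)*Ai (ω*lam)) * omega_sq
  exact ⟨hmain, fun h => by rw [hmain, h]; ring⟩

end
end

section
/- Define the Dawson-type integral D(s) := ∫₀^s exp(y² − s²) dy and, for ε > 0 and σ > 0, J_ε(σ) := ∫₀^ε ( ∫₀^x exp( σ·(y² − x²) ) dy ) dx. Then there exist constants C > 0 and ε₀ > 0 such that for every ε ∈ (0, ε₀) and every σ ≥ ε^{-3}, | J_ε(σ) − (log σ)/(4σ) | ≤ C·(1 + |log ε|)/σ. -/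
noncomputable section

open MeasureTheory

/-- The Dawson-type integral `D(s) = ∫₀^s exp(y² − s²) dy`. -/
def Dawson (s : ℝ) : ℝ := ∫ y in Set.Ioc (0:ℝ) s, Real.exp (y ^ 2 - s ^ 2)

/-- `J_ε(σ) = ∫₀^ε ∫₀^x exp(σ(y² − x²)) dy dx`. -/
def J (ε σ : ℝ) : ℝ :=
  ∫ x in Set.Ioc (0:ℝ) ε, ∫ y in Set.Ioc (0:ℝ) x, Real.exp (σ * (y ^ 2 - x ^ 2))

open intervalIntegral


private lemma expNegLeInv {s : ℝ} (hs : 0 < s) : Real.exp (-s) ≤ 1 / s := by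
  rw [Real.exp_neg, inv_eq_one_div]
  apply one_div_le_one_div_of_le hs
  linarith [Real.add_one_le_exp s]

private lemma expNegLeSq {s : ℝ} (hs : 0 < s) : Real.exp (-s) ≤ 4 / s ^ 2 := by
  have h2 : (0:ℝ) < s / 2 := by linarith
  have h := expNegLeInv h2
  have he : Real.exp (-s) = Real.exp (-(s/2)) * Real.exp (-(s/2)) := by
    rw [← Real.exp_add]; ring_nf
  rw [he]
  calc Real.exp (-(s/2)) * Real.exp (-(s/2)) ≤ (1/(s/2)) * (1/(s/2)) :=
        mul_le_mul h h (Real.exp_pos _).le (by positivity)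
    _ = 4 / s ^ 2 := by field_simp; ring

private lemma tail_bound {σ x : ℝ} (hσ : 0 < σ) (hx : 0 < x) :
    ∫ y in (x/2)..x, Real.exp (σ * (y ^ 2 - x ^ 2)) ≤ 1 / (σ * x) := by
  have hcf : Continuous fun y : ℝ => Real.exp (σ * (y ^ 2 - x ^ 2)) := by continuity
  have hcg : Continuous fun y : ℝ => Real.exp ((σ * x) * (y - x)) := by continuity
  have hmono : ∫ y in (x/2)..x, Real.exp (σ * (y ^ 2 - x ^ 2))
      ≤ ∫ y in (x/2)..x, Real.exp ((σ * x) * (y - x)) := by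
    apply integral_mono_on (by linarith) (hcf.intervalIntegrable _ _) (hcg.intervalIntegrable _ _)
    intro y hy
    rcases hy with ⟨hy1, hy2⟩
    apply Real.exp_le_exp.mpr
    nlinarith [mul_nonneg (mul_nonneg hσ.le (by linarith : (0:ℝ) ≤ y)) (by linarith : (0:ℝ) ≤ x - y)]
  have hσx : (0:ℝ) < σ * x := by positivity
  have hd : ∀ y ∈ Set.uIcc (x/2) x,
      HasDerivAt (fun y => Real.exp ((σ * x) * (y - x)) / (σ * x))
        (Real.exp ((σ * x) * (y - x))) y := by
    intro y _
    have h1 : HasDerivAt (fun y : ℝ => (σ * x) * (y - x)) (σ * x) y := by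
      simpa using ((hasDerivAt_id y).sub_const x).const_mul (σ * x)
    have h2 := (h1.exp).div_const (σ * x)
    refine h2.congr_deriv ?_
    field_simp
  have hFTC := integral_eq_sub_of_hasDerivAt hd (hcg.intervalIntegrable _ _)
  rw [hFTC] at hmono
  have he : Real.exp ((σ * x) * (x - x)) = 1 := by simp
  calc ∫ y in (x/2)..x, Real.exp (σ * (y ^ 2 - x ^ 2)) ≤ _ := hmono
    _ ≤ 1 / (σ * x) := by
        rw [he]
        have : 0 < Real.exp ((σ * x) * (x / 2 - x)) / (σ * x) := by positivity
        linarith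

set_option maxHeartbeats 1000000 in
private lemma inner_est {σ x : ℝ} (hσ : 0 < σ) (hx : 0 < x) :
    |(∫ y in (0:ℝ)..x, Real.exp (σ * (y ^ 2 - x ^ 2))) - 1 / (2 * σ * x)|
      ≤ 8 / (σ ^ 2 * x ^ 3) := by
  set f : ℝ → ℝ := fun y => Real.exp (σ * (y ^ 2 - x ^ 2)) with hf
  set g : ℝ → ℝ := fun y => Real.exp (σ * (y ^ 2 - x ^ 2)) / (2 * σ * y) with hg
  set h : ℝ → ℝ := fun y => Real.exp (σ * (y ^ 2 - x ^ 2)) / (2 * σ * y ^ 2) with hh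
  have hcf : Continuous f := by continuity
  have hintf : ∀ a b : ℝ, IntervalIntegrable f volume a b := fun a b =>
    hcf.intervalIntegrable a b
  have huIcc : Set.uIcc (x/2) x = Set.Icc (x/2) x := Set.uIcc_of_le (by linarith)
  have hconth : ContinuousOn h (Set.uIcc (x/2) x) := by
    apply ContinuousOn.div hcf.continuousOn (by fun_prop)
    intro y hy
    rw [huIcc] at hy
    have hy1 : x/2 ≤ y := hy.1
    have : 0 < y := by linarith
    positivity
  have hinth : IntervalIntegrable h volume (x/2) x := hconth.intervalIntegrable
  have hgderiv : ∀ y ∈ Set.uIcc (x/2) x, HasDerivAt g (f y - h y) y := by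
    intro y hy
    rw [huIcc] at hy
    have hy0 : 0 < y := lt_of_lt_of_le (by linarith) hy.1
    have hu : HasDerivAt (fun y : ℝ => σ * (y ^ 2 - x ^ 2)) (σ * (2 * y)) y := by
      simpa using ((hasDerivAt_pow 2 y).sub_const (x ^ 2)).const_mul σ
    have he := hu.exp
    have hden : HasDerivAt (fun y : ℝ => 2 * σ * y) (2 * σ) y := by
      simpa using (hasDerivAt_id y).const_mul (2 * σ)
    have hne : 2 * σ * y ≠ 0 := by positivity
    have hdiv := he.div hden hne
    have heq : f y - h y = (Real.exp (σ * (y ^ 2 - x ^ 2)) * (σ * (2 * y)) * (2 * σ * y) -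
        Real.exp (σ * (y ^ 2 - x ^ 2)) * (2 * σ)) / (2 * σ * y) ^ 2 := by
      simp only [hf, hh]
      field_simp
    exact heq ▸ hdiv
  have hIBP := integral_eq_sub_of_hasDerivAt hgderiv ((hintf (x/2) x).sub hinth)
  have hsubint : ∫ y in (x/2)..x, (f y - h y) =
      (∫ y in (x/2)..x, f y) - ∫ y in (x/2)..x, h y := integral_sub (hintf _ _) hinth
  have htail : (∫ y in (x/2)..x, f y) = g x - g (x/2) + ∫ y in (x/2)..x, h y := by
    rw [hsubint] at hIBP; linarith
  have hgx : g x = 1 / (2 * σ * x) := by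
    have h0 : σ * (x ^ 2 - x ^ 2) = 0 := by ring
    simp only [hg, h0, Real.exp_zero]
  have ht : (0:ℝ) < (3/4) * (σ * x ^ 2) := by positivity
  have hgx2val : g (x/2) = Real.exp (-((3/4) * (σ * x ^ 2))) / (σ * x) := by
    have h1 : σ * ((x/2) ^ 2 - x ^ 2) = -((3/4) * (σ * x ^ 2)) := by ring
    simp only [hg, h1]
    rw [show 2 * σ * (x/2) = σ * x by ring]
  have hgx2_nonneg : 0 ≤ g (x/2) := by rw [hgx2val]; positivity
  have hgx2_le : g (x/2) ≤ 2 / (σ ^ 2 * x ^ 3) := by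
    rw [hgx2val]
    have hA : (0:ℝ) < σ ^ 2 * x ^ 3 := by positivity
    calc Real.exp (-((3/4) * (σ * x ^ 2))) / (σ * x)
        ≤ (1 / ((3/4) * (σ * x ^ 2))) / (σ * x) :=
          (div_le_div_iff_of_pos_right (by positivity)).mpr (expNegLeInv ht)
      _ = (4/3) / (σ ^ 2 * x ^ 3) := by field_simp
      _ ≤ 2 / (σ ^ 2 * x ^ 3) := (div_le_div_iff_of_pos_right hA).mpr (by norm_num)
  have hP1_nonneg : 0 ≤ ∫ y in (0:ℝ)..(x/2), f y :=
    integral_nonneg (by linarith) fun y _ => (Real.exp_pos _).le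
  have hP1_le : (∫ y in (0:ℝ)..(x/2), f y) ≤ 4 / (σ ^ 2 * x ^ 3) := by
    have hstep : (∫ y in (0:ℝ)..(x/2), f y)
        ≤ ∫ _ in (0:ℝ)..(x/2), Real.exp (-((3/4) * (σ * x ^ 2))) := by
      apply integral_mono_on (by linarith) (hintf _ _) (intervalIntegrable_const)
      intro y hy
      apply Real.exp_le_exp.mpr
      nlinarith [mul_nonneg (mul_nonneg hσ.le (by linarith [hy.2] : (0:ℝ) ≤ x/2 - y))
        (by linarith [hy.1] : (0:ℝ) ≤ x/2 + y)]
    rw [intervalIntegral.integral_const, smul_eq_mul] at hstep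
    calc (∫ y in (0:ℝ)..(x/2), f y) ≤ (x/2 - 0) * Real.exp (-((3/4) * (σ * x ^ 2))) := hstep
      _ ≤ (x/2) * (4 / ((3/4) * (σ * x ^ 2)) ^ 2) := by
          rw [sub_zero]
          exact mul_le_mul_of_nonneg_left (expNegLeSq ht) (by linarith)
      _ = (32/9) / (σ ^ 2 * x ^ 3) := by field_simp; ring
      _ ≤ 4 / (σ ^ 2 * x ^ 3) :=
          (div_le_div_iff_of_pos_right (by positivity)).mpr (by norm_num)
  have hH_nonneg : 0 ≤ ∫ y in (x/2)..x, h y := by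
    apply integral_nonneg (by linarith)
    intro y hy
    have hy0 : 0 < y := lt_of_lt_of_le (by linarith) hy.1
    exact div_nonneg (Real.exp_pos _).le (by positivity)
  have hH_le : (∫ y in (x/2)..x, h y) ≤ 2 / (σ ^ 2 * x ^ 3) := by
    have hpt : ∀ y ∈ Set.Icc (x/2) x, h y ≤ (2 / (σ * x ^ 2)) * f y := by
      intro y hy
      have hy0 : 0 < y := lt_of_lt_of_le (by linarith) hy.1
      have hfpos : (0:ℝ) < f y := Real.exp_pos _
      have h1 : 1 / (2 * σ * y ^ 2) ≤ 2 / (σ * x ^ 2) := by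
        rw [div_le_div_iff₀ (by positivity) (by positivity)]
        nlinarith [mul_nonneg (mul_nonneg hσ.le (by linarith [hy.1] : (0:ℝ) ≤ 2*y - x))
          (by linarith : (0:ℝ) ≤ 2*y + x)]
      calc h y = f y * (1 / (2 * σ * y ^ 2)) := by
            simp only [hh, hf]; rw [div_eq_mul_one_div]
        _ ≤ f y * (2 / (σ * x ^ 2)) := mul_le_mul_of_nonneg_left h1 hfpos.le
        _ = (2 / (σ * x ^ 2)) * f y := mul_comm _ _
    have hmono := integral_mono_on (g := fun y => (2 / (σ * x ^ 2)) * f y) (by linarith : x/2 ≤ x) hinth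
      ((continuous_const.mul hcf).intervalIntegrable _ _) hpt
    rw [intervalIntegral.integral_const_mul] at hmono
    calc (∫ y in (x/2)..x, h y) ≤ (2 / (σ * x ^ 2)) * ∫ y in (x/2)..x, f y := hmono
      _ ≤ (2 / (σ * x ^ 2)) * (1 / (σ * x)) :=
          mul_le_mul_of_nonneg_left (tail_bound hσ hx) (by positivity)
      _ = 2 / (σ ^ 2 * x ^ 3) := by field_simp
  have hsplit : (∫ y in (0:ℝ)..x, f y)
      = (∫ y in (0:ℝ)..(x/2), f y) + ∫ y in (x/2)..x, f y :=
    (integral_add_adjacent_intervals (hintf _ _) (hintf _ _)).symm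
  have hA : (0:ℝ) < σ ^ 2 * x ^ 3 := by positivity
  have h28 : (2:ℝ) / (σ ^ 2 * x ^ 3) ≤ 8 / (σ ^ 2 * x ^ 3) :=
    (div_le_div_iff_of_pos_right hA).mpr (by norm_num)
  have h68 : (4:ℝ) / (σ ^ 2 * x ^ 3) + 2 / (σ ^ 2 * x ^ 3) ≤ 8 / (σ ^ 2 * x ^ 3) := by
    have heq : (4:ℝ) / (σ ^ 2 * x ^ 3) + 2 / (σ ^ 2 * x ^ 3) = 6 / (σ ^ 2 * x ^ 3) := by ring
    rw [heq]
    exact (div_le_div_iff_of_pos_right hA).mpr (by norm_num)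
  rw [abs_le]
  constructor
  · rw [hsplit, htail, hgx]
    linarith
  · rw [hsplit, htail, hgx]
    linarith

private lemma Kcont (σ : ℝ) :
    Continuous (fun x : ℝ => ∫ y in (0:ℝ)..x, Real.exp (σ * (y ^ 2 - x ^ 2))) := by
  have hP : Continuous (fun x : ℝ => ∫ y in (0:ℝ)..x, Real.exp (σ * y ^ 2)) :=
    intervalIntegral.continuous_primitive
      (fun a b => (Continuous.intervalIntegrable (by continuity) a b)) 0
  have hE : Continuous (fun x : ℝ => Real.exp (-(σ * x ^ 2))) := by continuity
  have heq : ∀ x : ℝ, Real.exp (-(σ * x ^ 2)) * (∫ y in (0:ℝ)..x, Real.exp (σ * y ^ 2))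
      = ∫ y in (0:ℝ)..x, Real.exp (σ * (y ^ 2 - x ^ 2)) := by
    intro x
    rw [← intervalIntegral.integral_const_mul]
    apply intervalIntegral.integral_congr
    intro y _
    show Real.exp (-(σ * x ^ 2)) * Real.exp (σ * y ^ 2) = Real.exp (σ * (y ^ 2 - x ^ 2))
    rw [← Real.exp_add]
    ring_nf
  exact (hE.mul hP).congr heq

set_option maxHeartbeats 400000 in
/-- There are `C > 0` and `ε₀ > 0` such that for every `ε ∈ (0,ε₀)` and every `σ ≥ ε^{-3}`,
`|J_ε(σ) − (log σ)/(4σ)| ≤ C (1 + |log ε|)/σ`. -/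
theorem J_asymptotics :
    ∃ C > (0:ℝ), ∃ ε₀ > (0:ℝ), ∀ ε : ℝ, 0 < ε → ε < ε₀ → ∀ σ : ℝ, ε ^ (-(3:ℝ)) ≤ σ →
      |J ε σ - Real.log σ / (4 * σ)| ≤ C * (1 + |Real.log ε|) / σ := by
  refine ⟨5, by norm_num, 1, by norm_num, ?_⟩
  intro ε hε hε1 σ hσ₁
  have hεpow : (0:ℝ) < ε ^ (-(3:ℝ)) := Real.rpow_pos_of_pos hε _
  have hσ : 0 < σ := lt_of_lt_of_le hεpow hσ₁
  have hrw : ε ^ (-(3:ℝ)) = (ε ^ (3:ℕ))⁻¹ := by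
    rw [← Real.rpow_natCast ε 3, ← Real.rpow_neg hε.le]
    norm_num
  have hσ3 : (ε ^ 3)⁻¹ ≤ σ := by rw [hrw] at hσ₁; exact_mod_cast hσ₁
  -- the splitting point δ
  set δ : ℝ := (Real.sqrt σ)⁻¹ with hδdef
  have hsqrt : 0 < Real.sqrt σ := Real.sqrt_pos.mpr hσ
  have hδ : 0 < δ := by positivity
  have hδsq : δ ^ 2 = 1 / σ := by
    rw [hδdef, inv_pow, Real.sq_sqrt hσ.le, inv_eq_one_div]
  have hδε : δ ≤ ε := by
    have hεsq : (1:ℝ) / ε ^ 2 ≤ σ := by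
      have h1 : ε ^ 3 ≤ ε ^ 2 := by nlinarith
      have h2 : (ε ^ 2)⁻¹ ≤ (ε ^ 3)⁻¹ := inv_anti₀ (by positivity) h1
      rw [one_div]
      exact h2.trans hσ3
    have h3 : 1 / ε ≤ Real.sqrt σ := by
      have h4 : Real.sqrt ((1:ℝ) / ε ^ 2) ≤ Real.sqrt σ := Real.sqrt_le_sqrt hεsq
      rwa [show (1:ℝ) / ε ^ 2 = (1 / ε) ^ 2 by ring, Real.sqrt_sq (by positivity)] at h4
    calc δ = (Real.sqrt σ)⁻¹ := hδdef
      _ ≤ (1 / ε)⁻¹ := inv_anti₀ (by positivity) h3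
      _ = ε := by rw [one_div, inv_inv]
  set K : ℝ → ℝ := fun x => ∫ y in (0:ℝ)..x, Real.exp (σ * (y ^ 2 - x ^ 2)) with hK
  have hKc : Continuous K := Kcont σ
  have hJ : J ε σ = ∫ x in (0:ℝ)..ε, K x := by
    unfold J
    rw [intervalIntegral.integral_of_le hε.le]
    apply setIntegral_congr_fun measurableSet_Ioc
    intro x hx
    exact (intervalIntegral.integral_of_le hx.1.le).symm
  have hsplit : (∫ x in (0:ℝ)..ε, K x) = (∫ x in (0:ℝ)..δ, K x) + ∫ x in δ..ε, K x :=
    (integral_add_adjacent_intervals (hKc.intervalIntegrable _ _)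
      (hKc.intervalIntegrable _ _)).symm
  -- piece 1 : 0 ≤ ∫₀^δ K ≤ 1/(2σ)
  have h1l : 0 ≤ ∫ x in (0:ℝ)..δ, K x := by
    apply integral_nonneg hδ.le
    intro x hx
    exact integral_nonneg hx.1 fun y _ => (Real.exp_pos _).le
  have h1u : (∫ x in (0:ℝ)..δ, K x) ≤ 1 / (2 * σ) := by
    have hpt : ∀ x ∈ Set.Icc (0:ℝ) δ, K x ≤ x := by
      intro x hx
      have : K x ≤ ∫ _ in (0:ℝ)..x, (1:ℝ) := by
        apply integral_mono_on hx.1 (Continuous.intervalIntegrable (by continuity) _ _)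
          (intervalIntegrable_const : IntervalIntegrable (fun _ => (1:ℝ)) volume 0 x)
        intro y hy
        rw [Real.exp_le_one_iff]
        nlinarith [hy.1, hy.2, hσ.le, mul_nonneg (mul_nonneg hσ.le (by linarith [hy.2] : (0:ℝ) ≤ x - y)) (by linarith [hy.1, hy.2, hx.1] : (0:ℝ) ≤ x + y)]
      simpa using this
    have hidint : IntervalIntegrable (fun x : ℝ => x) volume 0 δ :=
      Continuous.intervalIntegrable (by continuity) 0 δ
    have hmono := integral_mono_on hδ.le (hKc.intervalIntegrable _ _) hidint hpt
    have hid : (∫ x in (0:ℝ)..δ, x) = δ ^ 2 / 2 := by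
      rw [integral_id]; ring
    calc (∫ x in (0:ℝ)..δ, K x) ≤ ∫ x in (0:ℝ)..δ, x := hmono
      _ = δ ^ 2 / 2 := hid
      _ = 1 / (2 * σ) := by rw [hδsq]; ring
  -- piece 2
  have huIcc : Set.uIcc δ ε = Set.Icc δ ε := Set.uIcc_of_le hδε
  have hposOn : ∀ x ∈ Set.uIcc δ ε, 0 < x := by
    intro x hx; rw [huIcc] at hx; exact lt_of_lt_of_le hδ hx.1
  have hcontc : ContinuousOn (fun x : ℝ => 1 / (2 * σ * x)) (Set.uIcc δ ε) := by
    apply ContinuousOn.div continuousOn_const (by fun_prop)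
    intro x hx
    have := hposOn x hx
    positivity
  have hcontb : ContinuousOn (fun x : ℝ => 8 / (σ ^ 2 * x ^ 3)) (Set.uIcc δ ε) := by
    apply ContinuousOn.div continuousOn_const (by fun_prop)
    intro x hx
    have := hposOn x hx
    positivity
  have hintc : IntervalIntegrable (fun x : ℝ => 1 / (2 * σ * x)) volume δ ε :=
    hcontc.intervalIntegrable
  have hintb : IntervalIntegrable (fun x : ℝ => 8 / (σ ^ 2 * x ^ 3)) volume δ ε :=
    hcontb.intervalIntegrable
  have hptbound : ∀ x ∈ Set.Icc δ ε, |K x - 1 / (2 * σ * x)| ≤ 8 / (σ ^ 2 * x ^ 3) :=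
    fun x hx => inner_est hσ (lt_of_lt_of_le hδ hx.1)
  have h2u : (∫ x in δ..ε, K x) - (∫ x in δ..ε, 1 / (2 * σ * x)) ≤ ∫ x in δ..ε, 8 / (σ ^ 2 * x ^ 3) := by
    rw [← integral_sub (hKc.intervalIntegrable _ _) hintc]
    apply integral_mono_on hδε ((hKc.intervalIntegrable _ _).sub hintc) hintb
    intro x hx
    exact (abs_le.mp (hptbound x hx)).2
  have h2l : -(∫ x in δ..ε, 8 / (σ ^ 2 * x ^ 3)) ≤ (∫ x in δ..ε, K x) - (∫ x in δ..ε, 1 / (2 * σ * x)) := by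
    rw [← integral_sub (hKc.intervalIntegrable _ _) hintc, ← intervalIntegral.integral_neg]
    apply integral_mono_on hδε hintb.neg ((hKc.intervalIntegrable _ _).sub hintc)
    intro x hx
    exact neg_le.mp (neg_le.mpr (abs_le.mp (hptbound x hx)).1)
  -- error integral bound
  have herr : (∫ x in δ..ε, 8 / (σ ^ 2 * x ^ 3)) ≤ 4 / σ := by
    have hd : ∀ x ∈ Set.uIcc δ ε,
        HasDerivAt (fun x : ℝ => -(4 / (σ ^ 2 * x ^ 2))) (8 / (σ ^ 2 * x ^ 3)) x := by
      intro x hx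
      have hx0 : 0 < x := hposOn x hx
      have hv : HasDerivAt (fun x : ℝ => σ ^ 2 * x ^ 2) (σ ^ 2 * (2 * x)) x := by
        simpa using (hasDerivAt_pow 2 x).const_mul (σ ^ 2)
      have hne : σ ^ 2 * x ^ 2 ≠ 0 := by positivity
      have hdiv := ((hasDerivAt_const x (4:ℝ)).div hv hne).neg
      refine hdiv.congr_deriv ?_
      field_simp
      ring
    have hFTC := integral_eq_sub_of_hasDerivAt hd hcontb.intervalIntegrable
    rw [hFTC]
    have hε0 : 0 < ε := hε
    have hδ2 : σ ^ 2 * δ ^ 2 = σ := by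
      rw [hδsq]; field_simp
    have h1 : 0 < 4 / (σ ^ 2 * ε ^ 2) := by positivity
    have h2 : 4 / (σ ^ 2 * δ ^ 2) = 4 / σ := by rw [hδ2]
    linarith [h2 ▸ le_refl (4 / (σ ^ 2 * δ ^ 2))]
  -- value of the main term
  have hcval : (∫ x in δ..ε, 1 / (2 * σ * x))
      = (1 / (2 * σ)) * (Real.log ε - Real.log δ) := by
    have hfun : ∀ x : ℝ, 1 / (2 * σ * x) = (1 / (2 * σ)) * (1 / x) := fun x =>
      (one_div_mul_one_div (2 * σ) x).symm
    rw [show (fun x : ℝ => 1 / (2 * σ * x)) = fun x : ℝ => (1 / (2 * σ)) * (1 / x) from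
      funext hfun]
    rw [intervalIntegral.integral_const_mul]
    have h0 : (0:ℝ) ∉ Set.uIcc δ ε := by
      rw [huIcc]
      intro h
      exact absurd h.1 (not_le.mpr hδ)
    rw [integral_one_div h0, Real.log_div (ne_of_gt hε) (ne_of_gt hδ)]
  have hlogδ : Real.log δ = -(Real.log σ / 2) := by
    rw [hδdef, Real.log_inv, Real.log_sqrt hσ.le]
  have hcsplit : (1 / (2 * σ)) * (Real.log ε - Real.log δ)
      = Real.log σ / (4 * σ) + Real.log ε / (2 * σ) := by
    rw [hlogδ]
    field_simp
    ring
  have h2σ : (0:ℝ) < 2 * σ := by positivity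
  set L : ℝ := |Real.log ε| with hLdef
  have hL : 0 ≤ L := abs_nonneg _
  have hLu : Real.log ε / (2 * σ) ≤ L / (2 * σ) :=
    (div_le_div_iff_of_pos_right h2σ).mpr (le_abs_self _)
  have hLl : -(L / (2 * σ)) ≤ Real.log ε / (2 * σ) := by
    rw [← neg_div]
    exact (div_le_div_iff_of_pos_right h2σ).mpr (neg_abs_le _)
  have hIc : (∫ x in δ..ε, 1 / (2 * σ * x))
      = Real.log σ / (4 * σ) + Real.log ε / (2 * σ) := by rw [hcval, hcsplit]
  have hl1 : -(4/σ) - L/(2*σ) ≤ J ε σ - Real.log σ / (4 * σ) := by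
    linarith [hJ, hsplit, h2l, herr, hIc, h1l]
  have hu1 : J ε σ - Real.log σ / (4 * σ) ≤ 1/(2*σ) + 4/σ + L/(2*σ) := by
    linarith [hJ, hsplit, h2u, herr, hIc, h1u]
  have hl2 : -(5*(1+L)/σ) ≤ -(4/σ) - L/(2*σ) := by
    have e1 : -(4/σ) - L/(2*σ) = (-4 - L/2)/σ := by ring
    have e2 : -(5*(1+L)/σ) = (-(5*(1+L)))/σ := by ring
    rw [e1, e2]
    exact (div_le_div_iff_of_pos_right hσ).mpr (by linarith)
  have hu2 : 1/(2*σ) + 4/σ + L/(2*σ) ≤ 5*(1+L)/σ := by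
    have e1 : 1/(2*σ) + 4/σ + L/(2*σ) = (1/2 + 4 + L/2)/σ := by ring
    have e2 : 5*(1+L)/σ = (5+5*L)/σ := by ring
    rw [e1, e2]
    exact (div_le_div_iff_of_pos_right hσ).mpr (by linarith)
  rw [abs_le]
  exact ⟨hl2.trans hl1, hu1.trans hu2⟩

end
end
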